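/- arXiv:2401.10027 — 9 statements merged into one kernel-verified Lean document; each statement's English description precedes it below -/
import Mathlib

section
/- Let y be a nonempty primitive modified ascent sequence (viewed as a pattern). Then for every n ≥ 1, the number of modified ascent sequences of length n avoiding y equals the sum over k = 1,…,n of binomial(n-1, k-1) times the number of primitive modified ascent sequences of length k avoiding y; that is, |Modasc_n(y)| = Σ_{k=1}^n C(n-1,k-1)·|Prim_k(y)|. -/
/-- A Cayley permutation of length `n`: a word whose set of values is `{1, …, k}`
for some `k ≤ n`. -/
def IsCayley {n : ℕ} (x : Fin n → ℕ) : Prop :=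
  ∃ k, k ≤ n ∧ Set.range x = Set.Icc 1 k

/-- Ascent tops of `x`: indices `i` with `i = 0` or `x (i-1) < x i`. -/
def AscTops {n : ℕ} (x : Fin n → ℕ) : Set (Fin n) :=
  {i | ∀ j : Fin n, (j : ℕ) + 1 = (i : ℕ) → x j < x i}

/-- Leftmost copies of `x`: indices `i` such that the value `x i` does not occur earlier. -/
def Nub {n : ℕ} (x : Fin n → ℕ) : Set (Fin n) :=
  {i | ∀ j : Fin n, j < i → x j ≠ x i}

/-- A modified ascent sequence: a Cayley permutation whose ascent tops
are exactly its leftmost copies. -/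
def IsModasc {n : ℕ} (x : Fin n → ℕ) : Prop :=
  IsCayley x ∧ AscTops x = Nub x

/-- `x` has no flat steps (no two consecutive equal entries). -/
def NoFlat {n : ℕ} (x : Fin n → ℕ) : Prop :=
  ∀ i j : Fin n, (j : ℕ) = (i : ℕ) + 1 → x i ≠ x j

/-- A primitive modified ascent sequence. -/
def IsPrim {n : ℕ} (x : Fin n → ℕ) : Prop :=
  IsModasc x ∧ NoFlat x

/-- The word `x` contains the pattern `y`. -/
def Contains {n k : ℕ} (x : Fin n → ℕ) (y : Fin k → ℕ) : Prop :=
  ∃ f : Fin k → Fin n, StrictMono f ∧ ∀ s t, y s < y t ↔ x (f s) < x (f t)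

/-- The word `x` avoids the pattern `y`. -/
def Avoids {n k : ℕ} (x : Fin n → ℕ) (y : Fin k → ℕ) : Prop :=
  ¬ Contains x y

/-- Standardization: `(Std x) i = #{j : x j < x i} + #{j ≤ i : x j = x i}`. -/
def Std {n : ℕ} (x : Fin n → ℕ) : Fin n → ℕ :=
  fun i => (Finset.univ.filter fun j => x j < x i).card +
    (Finset.univ.filter fun j => j ≤ i ∧ x j = x i).card

/-- `p` is a permutation of `{1, …, n}` (written as a word). -/
def IsPerm {n : ℕ} (p : Fin n → ℕ) : Prop :=
  Function.Injective p ∧ Set.range p = Set.Icc 1 n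

/-- `p` contains the bivincular pattern `ω = (321, {1}, {1})`:
there are `i` and `j` with `i + 1 < j`, `p i > p (i+1)` and `p (i+1) = p j + 1`. -/
def ContainsOmega {n : ℕ} (p : Fin n → ℕ) : Prop :=
  ∃ (i j : Fin n) (hi : (i : ℕ) + 1 < n),
    (i : ℕ) + 1 < (j : ℕ) ∧ p ⟨(i : ℕ) + 1, hi⟩ < p i ∧ p ⟨(i : ℕ) + 1, hi⟩ = p j + 1

/-- Membership in `Ω_n`: a permutation of `{1, …, n}` whose first entry is `1`
and which avoids the bivincular pattern `ω`. -/
def InOmega {n : ℕ} (p : Fin n → ℕ) : Prop :=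
  IsPerm p ∧ (∀ h : 0 < n, p ⟨0, h⟩ = 1) ∧ ¬ ContainsOmega p
namespace PF

variable {N : ℕ}

/-- number of marked steps strictly before position `i`. -/
def cnt (s : Finset (Fin N)) (i : ℕ) : ℕ := (s.filter fun j : Fin N => (j : ℕ) < i).card

lemma cnt_mono (s : Finset (Fin N)) {a b : ℕ} (h : a ≤ b) : cnt s a ≤ cnt s b := by
  apply Finset.card_le_card
  intro x hx
  simp only [Finset.mem_filter] at *
  exact ⟨hx.1, lt_of_lt_of_le hx.2 h⟩

lemma cnt_zero (s : Finset (Fin N)) : cnt s 0 = 0 := by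
  simp [cnt]

lemma cnt_le_card (s : Finset (Fin N)) (i : ℕ) : cnt s i ≤ s.card :=
  Finset.card_le_card (Finset.filter_subset _ _)

lemma cnt_succ_mem (s : Finset (Fin N)) {a : ℕ} (h : a < N) (hm : (⟨a, h⟩ : Fin N) ∈ s) :
    cnt s (a + 1) = cnt s a + 1 := by
  have hset : s.filter (fun j : Fin N => (j : ℕ) < a + 1)
      = insert (⟨a, h⟩ : Fin N) (s.filter fun j : Fin N => (j : ℕ) < a) := by
    ext j
    simp only [Finset.mem_filter, Finset.mem_insert, Nat.lt_succ_iff_lt_or_eq]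
    constructor
    · rintro ⟨hj, hlt | heq⟩
      · exact Or.inr ⟨hj, hlt⟩
      · exact Or.inl (Fin.ext heq)
    · rintro (rfl | ⟨hj, hlt⟩)
      · exact ⟨hm, Or.inr rfl⟩
      · exact ⟨hj, Or.inl hlt⟩
  rw [cnt, hset, Finset.card_insert_of_notMem (by simp), cnt]

lemma cnt_succ_notmem (s : Finset (Fin N)) {a : ℕ} (h : ∀ hh : a < N, (⟨a, hh⟩ : Fin N) ∉ s) :
    cnt s (a + 1) = cnt s a := by
  unfold cnt
  congr 1
  apply Finset.filter_congr
  intro j hj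
  simp only [Nat.lt_succ_iff_lt_or_eq, eq_iff_iff]
  constructor
  · rintro (hlt | heq)
    · exact hlt
    · subst heq
      exact absurd hj (by simpa using h j.isLt)
  · exact Or.inl

lemma cnt_succ_le (s : Finset (Fin N)) (a : ℕ) : cnt s (a + 1) ≤ cnt s a + 1 := by
  by_cases hN : a < N
  · by_cases hm : (⟨a, hN⟩ : Fin N) ∈ s
    · rw [cnt_succ_mem s hN hm]
    · rw [cnt_succ_notmem s (fun hh => by convert hm)]
      omega
  · rw [cnt_succ_notmem s (fun hh => absurd hh hN)]
    omega

lemma cnt_ge (s : Finset (Fin N)) {a : ℕ} (h : N ≤ a) : cnt s a = s.card := by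
  unfold cnt
  rw [Finset.filter_true_of_mem (fun j _ => lt_of_lt_of_le j.isLt h)]

lemma exists_cnt (s : Finset (Fin N)) : ∀ b t, t ≤ cnt s b → ∃ i ≤ b, cnt s i = t := by
  intro b
  induction b with
  | zero => intro t ht; exact ⟨0, le_rfl, by rw [cnt_zero] at ht ⊢; omega⟩
  | succ b ih =>
    intro t ht
    by_cases h : t ≤ cnt s b
    · obtain ⟨i, hi, he⟩ := ih t h
      exact ⟨i, Nat.le_succ_of_le hi, he⟩
    · have := cnt_succ_le s b
      exact ⟨b + 1, le_rfl, by omega⟩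

/-- the set of positions with `cnt = t`. -/
def secSet (s : Finset (Fin N)) (t : ℕ) : Finset (Fin (N + 1)) :=
  Finset.univ.filter fun i : Fin (N + 1) => cnt s (i : ℕ) = t

lemma secSet_nonempty (s : Finset (Fin N)) (t : ℕ) (ht : t ≤ s.card) :
    (secSet s t).Nonempty := by
  obtain ⟨i, hi, he⟩ := exists_cnt s N t (by rw [cnt_ge s le_rfl]; exact ht)
  exact ⟨⟨i, Nat.lt_succ_of_le hi⟩, by simp [secSet, he]⟩

/-- first position of run `t`. -/
def sec (s : Finset (Fin N)) (t : Fin (s.card + 1)) : Fin (N + 1) :=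
  (secSet s (t : ℕ)).min' (secSet_nonempty s t (Nat.lt_succ_iff.mp t.isLt))

lemma cnt_sec (s : Finset (Fin N)) (t : Fin (s.card + 1)) : cnt s (sec s t : ℕ) = (t : ℕ) := by
  have := (secSet s (t : ℕ)).min'_mem (secSet_nonempty s t (Nat.lt_succ_iff.mp t.isLt))
  exact (Finset.mem_filter.mp this).2

lemma sec_le (s : Finset (Fin N)) (t : Fin (s.card + 1)) {i : Fin (N + 1)}
    (h : cnt s (i : ℕ) = (t : ℕ)) : sec s t ≤ i :=
  Finset.min'_le _ _ (by simp [secSet, h])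

/-- the run-index map `Fin (N+1) → Fin (s.card+1)`. -/
def gF (s : Finset (Fin N)) (i : Fin (N + 1)) : Fin (s.card + 1) :=
  ⟨cnt s (i : ℕ), Nat.lt_succ_of_le (cnt_le_card s _)⟩

lemma gF_mono (s : Finset (Fin N)) : Monotone (gF s) := by
  intro i j hij
  simpa [gF, Fin.le_def] using cnt_mono s (by exact_mod_cast hij)

lemma gF_sec (s : Finset (Fin N)) (t : Fin (s.card + 1)) : gF s (sec s t) = t :=
  Fin.ext (cnt_sec s t)

lemma gF_surj (s : Finset (Fin N)) : Function.Surjective (gF s) :=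
  fun t => ⟨sec s t, gF_sec s t⟩

lemma lt_of_gF_lt (s : Finset (Fin N)) {i j : Fin (N + 1)} (h : gF s i < gF s j) : i < j := by
  by_contra hc
  exact absurd (gF_mono s (not_lt.mp hc)) (not_le.mpr h)

/-- expand `w` by repeating according to runs determined by `s`. -/
def build (s : Finset (Fin N)) (w : Fin (s.card + 1) → ℕ) : Fin (N + 1) → ℕ :=
  fun i => w (gF s i)

lemma build_sec (s : Finset (Fin N)) (w : Fin (s.card + 1) → ℕ) (t : Fin (s.card + 1)) :
    build s w (sec s t) = w t := congrArg w (gF_sec s t)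

/-- the set of non-flat steps of `x`. -/
def steps (x : Fin (N + 1) → ℕ) : Finset (Fin N) :=
  Finset.univ.filter fun j : Fin N => x j.castSucc ≠ x j.succ

lemma mem_steps {x : Fin (N + 1) → ℕ} {j : Fin N} :
    j ∈ steps x ↔ x j.castSucc ≠ x j.succ := by simp [steps]

lemma run_const_aux (x : Fin (N + 1) → ℕ) :
    ∀ b a, a ≤ b → ∀ (ha : a < N + 1) (hb : b < N + 1),
      cnt (steps x) a = cnt (steps x) b → x ⟨a, ha⟩ = x ⟨b, hb⟩ := by
  intro b
  induction b with
  | zero =>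
    intro a hab ha hb _
    have : a = 0 := Nat.le_zero.mp hab
    subst this; rfl
  | succ b ih =>
    intro a hab ha hb hc
    rcases Nat.lt_or_ge a (b + 1) with h | h
    · have hab' : a ≤ b := Nat.lt_succ_iff.mp h
      have hbN : b < N := by omega
      have h2 : cnt (steps x) a ≤ cnt (steps x) b := cnt_mono _ hab'
      have h3 : cnt (steps x) b ≤ cnt (steps x) (b + 1) := cnt_mono _ (Nat.le_succ b)
      have hbb : cnt (steps x) b = cnt (steps x) (b + 1) := by omega
      have hnm : (⟨b, hbN⟩ : Fin N) ∉ steps x := by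
        intro hmem
        rw [cnt_succ_mem (steps x) hbN hmem] at hbb
        omega
      have hflat : x ⟨b, by omega⟩ = x ⟨b + 1, hb⟩ := by
        by_contra hne
        exact hnm (mem_steps.mpr hne)
      have := ih a hab' ha (by omega) (by omega)
      rw [this, hflat]
    · have : a = b + 1 := by omega
      subst this; rfl

lemma run_const {x : Fin (N + 1) → ℕ} {i j : Fin (N + 1)} (hij : i ≤ j)
    (h : cnt (steps x) (i : ℕ) = cnt (steps x) (j : ℕ)) : x i = x j := by
  have := run_const_aux x (j : ℕ) (i : ℕ) hij i.isLt j.isLt h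
  simpa using this

lemma steps_build (s : Finset (Fin N)) (w : Fin (s.card + 1) → ℕ) (hw : NoFlat w) :
    steps (build s w) = s := by
  ext j
  rw [mem_steps]
  have hcs : (j.castSucc : ℕ) = (j : ℕ) := rfl
  have hss : (j.succ : ℕ) = (j : ℕ) + 1 := rfl
  by_cases hj : j ∈ s
  · have hc : cnt s ((j : ℕ) + 1) = cnt s (j : ℕ) + 1 := by
      have := cnt_succ_mem s j.isLt (by simpa using hj)
      simpa using this
    simp only [hj, iff_true]
    have : build s w j.succ = w ⟨cnt s (j : ℕ) + 1, by
        have := cnt_le_card s ((j : ℕ) + 1); omega⟩ := by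
      unfold build gF
      congr 1
      exact Fin.ext (by simpa [hss] using hc)
    rw [this]
    exact fun hEq => hw _ _ rfl hEq
  · have hc : cnt s ((j : ℕ) + 1) = cnt s (j : ℕ) := by
      apply cnt_succ_notmem
      intro hh
      simpa using hj
    simp only [hj, iff_false, not_not]
    unfold build gF
    congr 1
    exact Fin.ext (by simpa [hss, hcs] using hc.symm)

/-- the primitive core of `x`: values at first positions of each run. -/
def core (x : Fin (N + 1) → ℕ) : Fin ((steps x).card + 1) → ℕ :=
  fun t => x (sec (steps x) t)

lemma build_core (x : Fin (N + 1) → ℕ) : build (steps x) (core x) = x := by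
  funext i
  show x (sec (steps x) (gF (steps x) i)) = x i
  have hcnt : cnt (steps x) ((sec (steps x) (gF (steps x) i)) : ℕ)
      = cnt (steps x) (i : ℕ) := cnt_sec (steps x) (gF (steps x) i)
  rcases le_total (sec (steps x) (gF (steps x) i)) i with h | h
  · exact run_const h hcnt
  · exact (run_const h hcnt.symm).symm

lemma noflat_core (x : Fin (N + 1) → ℕ) : NoFlat (core x) := by
  set s := steps x with hs
  intro t t' htt'
  -- p := first position of run t'
  set p := sec s t' with hp
  have hcp : cnt s (p : ℕ) = (t' : ℕ) := cnt_sec s t'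
  have hp0 : (p : ℕ) ≠ 0 := by
    intro h0
    rw [h0, cnt_zero] at hcp
    omega
  have hqN : (p : ℕ) - 1 < N + 1 := by omega
  set q : Fin (N + 1) := ⟨(p : ℕ) - 1, hqN⟩ with hq
  have hq1 : (q : ℕ) + 1 = (p : ℕ) := by simp [hq]; omega
  have hcq_le : cnt s (p : ℕ) ≤ cnt s ((q : ℕ)) + 1 := by
    rw [← hq1]; exact cnt_succ_le s _
  have hcq_mono : cnt s (q : ℕ) ≤ cnt s (p : ℕ) := cnt_mono s (by omega)
  have hne : cnt s (q : ℕ) ≠ cnt s (p : ℕ) := by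
    intro hEq
    have : p ≤ q := sec_le s t' (by rw [hEq, hcp])
    have : (p : ℕ) ≤ (q : ℕ) := this
    omega
  have hcq : cnt s (q : ℕ) = (t : ℕ) := by omega
  -- the step q ∈ steps x
  have hqN' : (q : ℕ) < N := by omega
  have hmem : (⟨(q : ℕ), hqN'⟩ : Fin N) ∈ s := by
    by_contra hnm
    have := cnt_succ_notmem s (a := (q : ℕ)) (fun hh => by
      intro hmm; exact hnm (by convert hmm))
    rw [hq1] at this
    omega
  have hne2 : x q ≠ x p := by
    have hst : x (Fin.castSucc ⟨(q : ℕ), hqN'⟩) ≠ x (Fin.succ ⟨(q : ℕ), hqN'⟩) :=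
      mem_steps.mp hmem
    have e1 : Fin.castSucc ⟨(q : ℕ), hqN'⟩ = q := Fin.ext rfl
    have e2 : Fin.succ ⟨(q : ℕ), hqN'⟩ = p := Fin.ext (by
      simp only [Fin.val_succ]
      omega)
    rw [e1, e2] at hst
    exact hst
  have h1 : core x t = x q := by
    apply run_const (x := x)
    · exact sec_le s t (by rw [hcq])
    · rw [cnt_sec]
      exact hcq.symm
  have h2 : core x t' = x p := rfl
  rw [h1, h2]
  exact hne2

/-- "first in fiber" predicate. -/
def FF (s : Finset (Fin N)) (i : Fin (N + 1)) : Prop :=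
  ∀ j : Fin (N + 1), (j : ℕ) + 1 = (i : ℕ) → cnt s (j : ℕ) < cnt s (i : ℕ)

lemma FF_sec (s : Finset (Fin N)) (t : Fin (s.card + 1)) : FF s (sec s t) := by
  intro j hj
  have hmono : cnt s (j : ℕ) ≤ cnt s ((sec s t : ℕ)) := cnt_mono s (by omega)
  rcases lt_or_eq_of_le hmono with h | h
  · exact h
  · exfalso
    have : sec s t ≤ j := sec_le s t (by rw [h, cnt_sec])
    have : ((sec s t : ℕ)) ≤ (j : ℕ) := this
    omega

lemma cnt_lt_of_FF {s : Finset (Fin N)} {i : Fin (N + 1)} (hFF : FF s i)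
    {j : Fin (N + 1)} (hj : j < i) : cnt s (j : ℕ) < cnt s (i : ℕ) := by
  have hi0 : (i : ℕ) ≠ 0 := by
    intro h0
    exact absurd (h0 ▸ (Fin.lt_def.mp hj)) (by omega)
  have hqN : (i : ℕ) - 1 < N + 1 := by omega
  have := hFF ⟨(i : ℕ) - 1, hqN⟩ (by simp; omega)
  have hmono : cnt s (j : ℕ) ≤ cnt s ((i : ℕ) - 1) := cnt_mono s (by
    have := Fin.lt_def.mp hj; omega)
  simp at this
  omega

lemma not_FF_flat {s : Finset (Fin N)} {w : Fin (s.card + 1) → ℕ} {i : Fin (N + 1)}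
    (h : ¬ FF s i) : ∃ j : Fin (N + 1), (j : ℕ) + 1 = (i : ℕ) ∧ build s w j = build s w i := by
  unfold FF at h
  push_neg at h
  obtain ⟨j, hj1, hj2⟩ := h
  have hmono : cnt s (j : ℕ) ≤ cnt s (i : ℕ) := cnt_mono s (by omega)
  have hEq : cnt s (j : ℕ) = cnt s (i : ℕ) := by omega
  exact ⟨j, hj1, congrArg w (Fin.ext hEq)⟩

lemma not_mem_of_not_FF {s : Finset (Fin N)} {w : Fin (s.card + 1) → ℕ} {i : Fin (N + 1)}
    (h : ¬ FF s i) : i ∉ AscTops (build s w) ∧ i ∉ Nub (build s w) := by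
  obtain ⟨j, hj1, hj2⟩ := not_FF_flat (w := w) h
  constructor
  · intro hmem
    exact absurd (hj2 ▸ hmem j hj1) (lt_irrefl _)
  · intro hmem
    exact hmem j (by rw [Fin.lt_def]; omega) hj2

lemma mem_ascTops_build {s : Finset (Fin N)} {w : Fin (s.card + 1) → ℕ} {i : Fin (N + 1)}
    (hFF : FF s i) : i ∈ AscTops (build s w) ↔ gF s i ∈ AscTops w := by
  by_cases hi0 : (i : ℕ) = 0
  · constructor
    · intro _ t' ht'
      exfalso
      have : cnt s (i : ℕ) = 0 := by rw [hi0, cnt_zero]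
      have hgi : ((gF s i : Fin (s.card+1)) : ℕ) = 0 := this
      omega
    · intro _ j hj
      omega
  · have hqN : (i : ℕ) - 1 < N + 1 := by omega
    set q : Fin (N + 1) := ⟨(i : ℕ) - 1, hqN⟩ with hq
    have hq1 : (q : ℕ) + 1 = (i : ℕ) := by simp [hq]; omega
    have hlt : cnt s (q : ℕ) < cnt s (i : ℕ) := hFF q hq1
    have hle : cnt s (i : ℕ) ≤ cnt s (q : ℕ) + 1 := by
      rw [← hq1]; exact cnt_succ_le s _
    have hEq : cnt s (i : ℕ) = cnt s (q : ℕ) + 1 := by omega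
    constructor
    · intro hmem t' ht'
      have ht'q : (t' : ℕ) = cnt s (q : ℕ) := by
        have : ((gF s i : Fin (s.card+1)) : ℕ) = cnt s (i : ℕ) := rfl
        omega
      have := hmem q hq1
      have hbq : build s w q = w t' := congrArg w (Fin.ext ht'q.symm)
      rwa [hbq] at this
    · intro hmem j hj
      have hjq : (j : ℕ) = (q : ℕ) := by omega
      have h1 : build s w j = w ⟨cnt s (q : ℕ), by
          have := cnt_le_card s (q : ℕ); omega⟩ :=
        congrArg w (Fin.ext (congrArg (cnt s) hjq))
      have h2 := hmem ⟨cnt s (q : ℕ), by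
          have := cnt_le_card s (q : ℕ); omega⟩ hEq.symm
      rw [h1]
      exact h2
  
lemma mem_nub_build {s : Finset (Fin N)} {w : Fin (s.card + 1) → ℕ} {i : Fin (N + 1)}
    (hFF : FF s i) : i ∈ Nub (build s w) ↔ gF s i ∈ Nub w := by
  constructor
  · intro hmem t' ht'
    -- find position j < i with cnt = t'
    have ht'le : (t' : ℕ) ≤ s.card := Nat.lt_succ_iff.mp t'.isLt
    set j := sec s t' with hj
    have hcj : cnt s (j : ℕ) = (t' : ℕ) := cnt_sec s t'
    have hji : j < i := by
      apply lt_of_gF_lt s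
      rw [gF_sec]
      exact ht'
    have := hmem j hji
    have hbj : build s w j = w t' := congrArg w (Fin.ext hcj)
    rwa [hbj] at this
  · intro hmem j hj
    have hlt : cnt s (j : ℕ) < cnt s (i : ℕ) := cnt_lt_of_FF hFF hj
    exact hmem ⟨cnt s (j : ℕ), by have := cnt_le_card s (j:ℕ); omega⟩ (by rw [Fin.lt_def]; exact hlt)

lemma range_build (s : Finset (Fin N)) (w : Fin (s.card + 1) → ℕ) :
    Set.range (build s w) = Set.range w :=
  Function.Surjective.range_comp (gF_surj s) w

lemma cayley_build_iff (s : Finset (Fin N)) (w : Fin (s.card + 1) → ℕ) :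
    IsCayley (build s w) ↔ IsCayley w := by
  constructor
  · rintro ⟨k, hk, hr⟩
    refine ⟨k, ?_, by rw [← range_build s w]; exact hr⟩
    -- k ≤ s.card + 1 since Icc 1 k = range w has ≤ s.card+1 elements
    have him : (Finset.univ.image w : Finset ℕ) = Finset.Icc 1 k := by
      apply Finset.coe_injective
      rw [Finset.coe_image, Finset.coe_univ, Set.image_univ, Finset.coe_Icc]
      rw [← range_build s w]
      exact hr
    have h1 : (Finset.Icc 1 k).card = k := by rw [Nat.card_Icc]; omega
    have h2 : (Finset.univ.image w : Finset ℕ).card ≤ s.card + 1 := by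
      apply le_trans (Finset.card_image_le)
      simp
    have h3 : (Finset.univ.image w : Finset ℕ).card = k := by rw [him, h1]
    omega
  · rintro ⟨k, hk, hr⟩
    refine ⟨k, ?_, by rw [range_build s w]; exact hr⟩
    have : s.card ≤ N := by
      have := Finset.card_le_univ s
      simpa using this
    omega

lemma modasc_build_iff (s : Finset (Fin N)) (w : Fin (s.card + 1) → ℕ) :
    IsModasc (build s w) ↔ IsModasc w := by
  unfold IsModasc
  rw [cayley_build_iff]
  apply and_congr_right'
  constructor
  · intro h
    ext t
    have hFF := FF_sec s t
    have h1 := (mem_ascTops_build (w := w) hFF)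
    have h2 := (mem_nub_build (w := w) hFF)
    rw [gF_sec] at h1 h2
    rw [← h1, ← h2, h]
  · intro h
    ext i
    by_cases hFF : FF s i
    · rw [mem_ascTops_build hFF, mem_nub_build hFF, h]
    · have := not_mem_of_not_FF (w := w) hFF
      simp [this.1, this.2]

lemma contains_build_iff (s : Finset (Fin N)) (w : Fin (s.card + 1) → ℕ)
    {m : ℕ} (y : Fin m → ℕ) (hy : NoFlat y) :
    Contains (build s w) y ↔ Contains w y := by
  constructor
  · rintro ⟨f, hf, hiff⟩
    refine ⟨fun u => gF s (f u), ?_, ?_⟩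
    · intro u v huv
      rcases lt_or_eq_of_le (gF_mono s (le_of_lt (hf huv))) with h | h
      · exact h
      · exfalso
        -- equal run indices across u..v give a flat step in y
        have hu1 : (u : ℕ) + 1 < m := by
          have := Fin.lt_def.mp huv
          have := v.isLt
          omega
        set u1 : Fin m := ⟨(u : ℕ) + 1, hu1⟩ with hu1d
        have huu1 : u < u1 := by rw [Fin.lt_def]; simp [hu1d]
        have hu1v : u1 ≤ v := by rw [Fin.le_def]; have := Fin.lt_def.mp huv; simp [hu1d]; omega
        have e1 : gF s (f u) ≤ gF s (f u1) := gF_mono s (le_of_lt (hf huu1))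
        have e2 : gF s (f u1) ≤ gF s (f v) := gF_mono s (hf.monotone hu1v)
        have eq1 : gF s (f u) = gF s (f u1) := le_antisymm e1 (h ▸ e2)
        have hx : build s w (f u) = build s w (f u1) := congrArg w eq1
        have hy1 : ¬ y u < y u1 := fun hc => absurd ((hiff u u1).mp hc) (by rw [hx]; exact lt_irrefl _)
        have hy2 : ¬ y u1 < y u := fun hc => absurd ((hiff u1 u).mp hc) (by rw [hx]; exact lt_irrefl _)
        exact hy u u1 (by simp [hu1d]) (by omega)
    · intro u v
      exact hiff u v
  · rintro ⟨f, hf, hiff⟩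
    refine ⟨fun u => sec s (f u), ?_, ?_⟩
    · intro u v huv
      apply lt_of_gF_lt s
      rw [gF_sec, gF_sec]
      exact hf huv
    · intro u v
      rw [build_sec, build_sec]
      exact hiff u v

lemma cayley_bound {k : ℕ} {w : Fin k → ℕ} (h : IsCayley w) (i : Fin k) : w i ≤ k := by
  obtain ⟨c, hc, hr⟩ := h
  have : w i ∈ Set.Icc 1 c := hr ▸ Set.mem_range_self i
  exact le_trans this.2 hc

lemma finite_aux {k : ℕ} (P : (Fin k → ℕ) → Prop) (hP : ∀ w, P w → IsCayley w) :
    Finite {w : Fin k → ℕ // P w} := by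
  apply Finite.of_injective
    (fun w : {w : Fin k → ℕ // P w} =>
      (fun i => (⟨w.1 i, Nat.lt_succ_of_le (cayley_bound (hP _ w.2) i)⟩ : Fin (k + 1)) :
        Fin k → Fin (k + 1)))
  intro a b hab
  apply Subtype.ext
  funext i
  exact congrArg Fin.val (congrFun hab i)

end PF

/-- For a nonempty primitive modified ascent sequence pattern `y`,
`|Modasc_n(y)| = Σ_{k=1}^n C(n-1,k-1) · |Prim_k(y)|` for all `n ≥ 1`. -/
theorem prim_to_full {m : ℕ} (y : Fin m → ℕ) (hm : 1 ≤ m) (hy : IsPrim y) :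
    ∀ n : ℕ, 1 ≤ n →
      Nat.card {x : Fin n → ℕ // IsModasc x ∧ Avoids x y} =
        ∑ k ∈ Finset.Icc 1 n, Nat.choose (n - 1) (k - 1) *
          Nat.card {w : Fin k → ℕ // IsPrim w ∧ Avoids w y} := by
  classical
  intro n hn
  obtain ⟨N, rfl⟩ : ∃ N, n = N + 1 := ⟨n - 1, by omega⟩
  have hyNF : NoFlat y := hy.2
  set c : ℕ → ℕ := fun k => Nat.card {w : Fin k → ℕ // IsPrim w ∧ Avoids w y} with hc
  have finT : ∀ k : ℕ, Finite {w : Fin k → ℕ // IsPrim w ∧ Avoids w y} :=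
    fun k => PF.finite_aux _ (fun w h => h.1.1.1)
  have finL : Finite {x : Fin (N + 1) → ℕ // IsModasc x ∧ Avoids x y} :=
    PF.finite_aux _ (fun w h => h.1.1)
  -- the expansion map
  set B : (Σ s : Finset (Fin N), {w : Fin (s.card + 1) → ℕ // IsPrim w ∧ Avoids w y}) →
      {x : Fin (N + 1) → ℕ // IsModasc x ∧ Avoids x y} := fun p =>
    ⟨PF.build p.1 p.2.1, by
      refine ⟨(PF.modasc_build_iff p.1 p.2.1).mpr p.2.2.1.1, ?_⟩
      intro hcon
      exact p.2.2.2 ((PF.contains_build_iff p.1 p.2.1 y hyNF).mp hcon)⟩ with hB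
  have hinj : Function.Injective B := by
    rintro ⟨s, w, hw⟩ ⟨s', w', hw'⟩ h
    have hEq : PF.build s w = PF.build s' w' := congrArg Subtype.val h
    have hs : s = s' := by
      rw [← PF.steps_build s w hw.1.2, ← PF.steps_build s' w' hw'.1.2, hEq]
    subst hs
    have hww : w = w' := by
      funext t
      rw [← PF.build_sec s w t, ← PF.build_sec s w' t, hEq]
    subst hww
    rfl
  have hsurj : Function.Surjective B := by
    rintro ⟨x, hx1, hx2⟩
    have hbc := PF.build_core x
    refine ⟨⟨PF.steps x, ⟨PF.core x, ⟨?_, PF.noflat_core x⟩, ?_⟩⟩, ?_⟩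
    · exact (PF.modasc_build_iff _ _).mp (by rw [hbc]; exact hx1)
    · intro hcon
      apply hx2
      rw [← hbc]
      exact (PF.contains_build_iff _ _ y hyNF).mpr hcon
    · exact Subtype.ext hbc
  have key : Nat.card {x : Fin (N + 1) → ℕ // IsModasc x ∧ Avoids x y}
      = Nat.card (Σ s : Finset (Fin N),
          {w : Fin (s.card + 1) → ℕ // IsPrim w ∧ Avoids w y}) :=
    (Nat.card_eq_of_bijective B ⟨hinj, hsurj⟩).symm
  letI : ∀ s : Finset (Fin N), Fintype {w : Fin (s.card + 1) → ℕ // IsPrim w ∧ Avoids w y} :=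
    fun s => Fintype.ofFinite _
  rw [key, Nat.card_eq_fintype_card, Fintype.card_sigma]
  have step1 : ∀ s : Finset (Fin N),
      Fintype.card {w : Fin (s.card + 1) → ℕ // IsPrim w ∧ Avoids w y} = c (s.card + 1) :=
    fun s => Nat.card_eq_fintype_card.symm
  calc ∑ s : Finset (Fin N), Fintype.card {w : Fin (s.card + 1) → ℕ // IsPrim w ∧ Avoids w y}
      = ∑ s ∈ (Finset.univ : Finset (Fin N)).powerset, c (s.card + 1) := by
        rw [Finset.powerset_univ]
        exact Finset.sum_congr rfl (fun s _ => step1 s)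
    _ = ∑ j ∈ Finset.range ((Finset.univ : Finset (Fin N)).card + 1),
          ∑ t ∈ Finset.powersetCard j (Finset.univ : Finset (Fin N)), c (t.card + 1) :=
        Finset.sum_powerset _ _
    _ = ∑ j ∈ Finset.range (N + 1), N.choose j * c (j + 1) := by
        rw [Finset.card_univ, Fintype.card_fin]
        apply Finset.sum_congr rfl
        intro j hj
        have hconst : ∀ t ∈ Finset.powersetCard j (Finset.univ : Finset (Fin N)),
            c (t.card + 1) = c (j + 1) := by
          intro t ht
          rw [(Finset.mem_powersetCard.mp ht).2]
        rw [Finset.sum_congr rfl hconst, Finset.sum_const, smul_eq_mul,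
          Finset.card_powersetCard, Finset.card_univ, Fintype.card_fin]
    _ = ∑ k ∈ Finset.Icc 1 (N + 1), Nat.choose (N + 1 - 1) (k - 1) * c k := by
        rw [← Finset.Ico_add_one_right_eq_Icc, Finset.sum_Ico_eq_sum_range]
        apply Finset.sum_congr (by norm_num) ?_
        intro j _
        congr 1
        · congr 1 <;> omega
        · congr 1
          omega
end

section
/- Let x = x_1⋯x_n be a primitive modified ascent sequence. Then: (i) every weak left-to-right maximum of x is a (strict) left-to-right maximum, i.e. if x_j ≤ x_i for all j < i then x_j < x_i for all j < i; (ii) every weak right-to-left maximum of x is a (strict) right-to-left maximum, i.e. if x_j ≤ x_i for all j > i then x_j < x_i for all j > i; (iii) the only left-to-right minimum of x is its first entry, i.e. the set of indices i such that x_j > x_i for all j < i equals {1}. -/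
/-- In a primitive modified ascent sequence, weak left-to-right maxima
are strict, weak right-to-left maxima are strict, and the only left-to-right
minimum is the first entry. -/
theorem prim_stats {n : ℕ} (x : Fin n → ℕ) (hx : IsPrim x) :
    (∀ i : Fin n, (∀ j < i, x j ≤ x i) → (∀ j < i, x j < x i)) ∧
    (∀ i : Fin n, (∀ j, i < j → x j ≤ x i) → (∀ j, i < j → x j < x i)) ∧
    {i : Fin n | ∀ j < i, x i < x j} = {i : Fin n | (i : ℕ) = 0} := by
  obtain ⟨⟨_, hAN⟩, hNF⟩ := hx
  have key : ∀ i : Fin n, (∃ j < i, x j = x i) →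
      ∃ j : Fin n, (j : ℕ) + 1 = (i : ℕ) ∧ ¬ x j < x i := by
    intro i hi
    by_contra h
    push_neg at h
    have hmem : i ∈ AscTops x := fun j hj => h j hj
    rw [hAN] at hmem
    obtain ⟨j, hj, hje⟩ := hi
    exact hmem j hj hje
  refine ⟨?_, ?_, ?_⟩
  · intro i hw j hj
    rcases lt_or_eq_of_le (hw j hj) with h | h
    · exact h
    · exfalso
      obtain ⟨k, hk1, hk2⟩ := key i ⟨j, hj, h⟩
      have hki : k < i := by rw [Fin.lt_def]; omega
      exact hNF k i hk1.symm (le_antisymm (hw k hki) (not_lt.mp hk2))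
  · intro i hw j hij
    rcases lt_or_eq_of_le (hw j hij) with h | h
    · exact h
    · exfalso
      obtain ⟨k, hk1, hk2⟩ := key j ⟨i, hij, h.symm⟩
      have hik : i ≤ k := by
        have := hij; rw [Fin.lt_def] at this; rw [Fin.le_def]; omega
      have hxk : x k ≤ x j := by
        rcases lt_or_eq_of_le hik with h2 | h2
        · exact (hw k h2).trans_eq h.symm
        · subst h2; exact h.ge
      exact hNF k j hk1.symm (le_antisymm hxk (not_lt.mp hk2))
  · ext i
    simp only [Set.mem_setOf_eq]
    constructor
    · intro hmin
      by_contra h0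
      have hpos : 0 < (i : ℕ) := Nat.pos_of_ne_zero h0
      have hmem : i ∈ Nub x := fun j hj => (hmin j hj).ne'
      rw [← hAN] at hmem
      set p : Fin n := ⟨(i : ℕ) - 1, by omega⟩ with hp
      have hp1 : (p : ℕ) + 1 = (i : ℕ) := by simp [hp]; omega
      have h1 := hmem p hp1
      have h2 := hmin p (by rw [Fin.lt_def]; omega)
      omega
    · intro h0 j hj
      rw [Fin.lt_def, h0] at hj
      omega
end

section
/- Let x = x_1⋯x_n be a Cayley permutation and let p = st(x) be its standardization. If i < j are indices with p_i = p_j + 1, then x_i is a leftmost copy in x, i.e. x_m ≠ x_i for all m < i. -/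
/-- If `i < j` and `(st x) i = (st x) j + 1`, then `x i` is a leftmost
copy in `x`. -/
theorem std_nub {n : ℕ} (x : Fin n → ℕ) (hx : IsCayley x) (i j : Fin n)
    (hij : i < j) (h : Std x i = Std x j + 1) :
    ∀ m < i, x m ≠ x i := by
  classical
  intro m hm hme
  set S1 : Fin n → Finset (Fin n) := fun a => Finset.univ.filter fun t => x t < x a with hS1
  set S2 : Fin n → Finset (Fin n) := fun a => Finset.univ.filter fun t => t ≤ a ∧ x t = x a with hS2
  have hstd : ∀ a, Std x a = (S1 a).card + (S2 a).card := fun a => rfl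
  have hdisj : ∀ a, Disjoint (S1 a) (S2 a) := by
    intro a
    rw [Finset.disjoint_left]
    intro t ht1 ht2
    simp only [hS1, hS2, Finset.mem_filter, Finset.mem_univ, true_and] at ht1 ht2
    omega
  have hmem : ∀ a, a ∈ S2 a := by
    intro a; simp [hS2]
  have key : x j < x i := by
    rcases lt_trichotomy (x i) (x j) with hlt | heq | hgt
    · have hsub : S1 i ∪ S2 i ⊆ S1 j := by
        intro t ht
        simp only [hS1, hS2, Finset.mem_union, Finset.mem_filter, Finset.mem_univ,
          true_and] at ht ⊢
        rcases ht with ht | ht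
        · omega
        · omega
      have hle := Finset.card_le_card hsub
      rw [Finset.card_union_of_disjoint (hdisj i)] at hle
      have h2 := Finset.card_pos.mpr ⟨j, hmem j⟩
      rw [hstd i, hstd j] at h
      omega
    · have hsub : S2 i ⊆ S2 j := by
        intro t ht
        simp only [hS2, Finset.mem_filter, Finset.mem_univ, true_and] at ht ⊢
        exact ⟨ht.1.trans hij.le, ht.2.trans heq⟩
      have hjnot : j ∉ S2 i := by
        simp only [hS2, Finset.mem_filter, Finset.mem_univ, true_and]
        intro ht; exact absurd ht.1 (not_le.mpr hij)
      have hcard : (S2 i).card < (S2 j).card :=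
        Finset.card_lt_card ((Finset.ssubset_iff_of_subset hsub).mpr ⟨j, hmem j, hjnot⟩)
      have hS1eq : S1 i = S1 j := by simp [hS1, heq]
      rw [hstd i, hstd j, hS1eq] at h
      omega
    · exact hgt
  have hsub : S1 j ∪ S2 j ⊆ S1 i := by
    intro t ht
    simp only [hS1, hS2, Finset.mem_union, Finset.mem_filter, Finset.mem_univ,
      true_and] at ht ⊢
    rcases ht with ht | ht
    · omega
    · omega
  have h1 := Finset.card_le_card hsub
  rw [Finset.card_union_of_disjoint (hdisj j)] at h1
  have hm2 : m ∈ S2 i := by simp [hS2, hme, hm.le]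
  have hi2 : i ∈ S2 i := hmem i
  have hcard2 : 2 ≤ (S2 i).card := by
    have hsub2 : ({m, i} : Finset (Fin n)) ⊆ S2 i := by
      intro t ht
      simp only [Finset.mem_insert, Finset.mem_singleton] at ht
      rcases ht with rfl | rfl
      · exact hm2
      · exact hi2
    have hc : ({m, i} : Finset (Fin n)).card = 2 := by
      rw [Finset.card_insert_of_notMem (by simp [Fin.ne_of_lt hm]), Finset.card_singleton]
    calc 2 = ({m, i} : Finset (Fin n)).card := hc.symm
      _ ≤ _ := Finset.card_le_card hsub2
  rw [hstd i, hstd j] at h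
  omega
end

section
/- If x is a modified ascent sequence of length n, then its standardization st(x) belongs to Ω_n; that is, st(x) has first entry 1 and avoids the bivincular pattern ω. -/
open Finset in
lemma std_le_aux {n} (x : Fin n → ℕ) {a b : Fin n} (h : x a < x b) :
    Std x a ≤ (univ.filter fun t => x t < x b).card := by
  classical
  have hdisj : Disjoint (univ.filter fun j => x j < x a)
      (univ.filter fun j => j ≤ a ∧ x j = x a) := by
    rw [Finset.disjoint_left]
    intro t ht ht'
    simp only [mem_filter] at ht ht'
    omega
  have hsub : (univ.filter fun j => x j < x a) ∪ (univ.filter fun j => j ≤ a ∧ x j = x a)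
      ⊆ (univ.filter fun t => x t < x b) := by
    intro t ht
    simp only [mem_union, mem_filter, mem_univ, true_and] at ht ⊢
    rcases ht with h1 | ⟨_, h2⟩ <;> omega
  calc Std x a = ((univ.filter fun j => x j < x a) ∪ (univ.filter fun j => j ≤ a ∧ x j = x a)).card := (card_union_of_disjoint hdisj).symm
    _ ≤ _ := card_le_card hsub

open Finset in
lemma std_lt_of_val_lt {n} (x : Fin n → ℕ) {a b : Fin n} (h : x a < x b) :
    Std x a < Std x b := by
  classical
  have h1 := std_le_aux x h
  have h2 : 1 ≤ (univ.filter fun j => j ≤ b ∧ x j = x b).card := by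
    apply card_pos.mpr
    exact ⟨b, by simp⟩
  unfold Std at *
  omega

open Finset in
lemma std_lt_of_eq_lt {n} (x : Fin n → ℕ) {a b : Fin n} (h : x a = x b) (hab : a < b) :
    Std x a < Std x b := by
  classical
  have e1 : (univ.filter fun j => x j < x a) = (univ.filter fun j => x j < x b) := by
    rw [h]
  have e2 : (univ.filter fun j => j ≤ a ∧ x j = x a) ⊂ (univ.filter fun j => j ≤ b ∧ x j = x b) := by
    constructor
    · intro t ht
      simp only [mem_filter, mem_univ, true_and] at ht ⊢
      exact ⟨le_trans ht.1 hab.le, ht.2.trans h⟩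
    · intro hc
      have : b ∈ (univ.filter fun j => j ≤ a ∧ x j = x a) := hc (by simp)
      simp only [mem_filter, mem_univ, true_and] at this
      exact absurd this.1 (not_le.mpr hab)
  unfold Std
  rw [e1]
  exact Nat.add_lt_add_left (card_lt_card e2) _

lemma std_inj {n} (x : Fin n → ℕ) : Function.Injective (Std x) := by
  intro a b hab
  by_contra hne
  rcases lt_trichotomy (x a) (x b) with h | h | h
  · exact absurd hab (std_lt_of_val_lt x h).ne
  · rcases lt_trichotomy a b with h' | h' | h'
    · exact absurd hab (std_lt_of_eq_lt x h h').ne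
    · exact hne h'
    · exact absurd hab.symm (std_lt_of_eq_lt x h.symm h').ne
  · exact absurd hab.symm (std_lt_of_val_lt x h).ne

open Finset in
lemma std_range {n} (x : Fin n → ℕ) : Set.range (Std x) = Set.Icc 1 n := by
  classical
  have hmem : ∀ i, Std x i ∈ Finset.Icc 1 n := by
    intro i
    simp only [Finset.mem_Icc]
    constructor
    · have : 1 ≤ (univ.filter fun j => j ≤ i ∧ x j = x i).card :=
        card_pos.mpr ⟨i, by simp⟩
      unfold Std; omega
    · have hdisj : Disjoint (univ.filter fun j => x j < x i)
          (univ.filter fun j => j ≤ i ∧ x j = x i) := by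
        rw [Finset.disjoint_left]
        intro t ht ht'
        simp only [mem_filter] at ht ht'
        omega
      have := card_union_of_disjoint hdisj
      have h2 : ((univ.filter fun j => x j < x i) ∪ (univ.filter fun j => j ≤ i ∧ x j = x i)).card ≤ n := by
        calc _ ≤ (univ : Finset (Fin n)).card := card_le_card (subset_univ _)
          _ = n := card_univ.trans (Fintype.card_fin n)
      unfold Std; omega
  have himg : univ.image (Std x) = Finset.Icc 1 n := by
    apply Finset.eq_of_subset_of_card_le
    · intro t ht
      simp only [mem_image] at ht
      obtain ⟨i, _, rfl⟩ := ht
      exact hmem i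
    · rw [Nat.card_Icc, card_image_of_injective _ (std_inj x), card_univ, Fintype.card_fin]
      omega
  have : Set.range (Std x) = ↑(univ.image (Std x)) := by simp
  rw [this, himg, Finset.coe_Icc]

lemma val_ge_one {n} {x : Fin n → ℕ} (hx : IsCayley x) (j : Fin n) : 1 ≤ x j := by
  obtain ⟨k, _, hr⟩ := hx
  have : x j ∈ Set.Icc 1 k := hr ▸ Set.mem_range_self j
  exact this.1

lemma first_eq_one {n} {x : Fin n → ℕ} (hx : IsModasc x) (h : 0 < n) :
    x ⟨0, h⟩ = 1 := by
  classical
  obtain ⟨k, hk, hr⟩ := hx.1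
  have hk1 : 1 ≤ k := by
    have : x ⟨0, h⟩ ∈ Set.Icc 1 k := hr ▸ Set.mem_range_self _
    exact le_trans this.1 this.2
  have h1 : (1 : ℕ) ∈ Set.range x := by
    rw [hr]; exact ⟨le_refl 1, hk1⟩
  obtain ⟨i0, hi0⟩ := h1
  have hne : (Finset.univ.filter fun i => x i = 1).Nonempty := ⟨i0, by simp [hi0]⟩
  set i := (Finset.univ.filter fun i => x i = 1).min' hne with hidef
  have hxi : x i = 1 := by
    have := Finset.min'_mem _ hne
    simpa using this
  have hnub : i ∈ Nub x := by
    intro j hj hcon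
    have : i ≤ j := Finset.min'_le _ j (by simp [hcon, hxi])
    exact absurd hj (not_lt.mpr this)
  have hasc : i ∈ AscTops x := hx.2 ▸ hnub
  have hi0' : (i : ℕ) = 0 := by
    by_contra hne0
    have hpos : 0 < (i : ℕ) := Nat.pos_of_ne_zero hne0
    have hlt : (i : ℕ) - 1 < n := lt_trans (Nat.sub_lt hpos one_pos) i.isLt
    have := hasc ⟨(i : ℕ) - 1, hlt⟩ (by simp; omega)
    rw [hxi] at this
    exact absurd (val_ge_one hx.1 ⟨(i : ℕ) - 1, hlt⟩) (not_le.mpr this)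
  have : (⟨0, h⟩ : Fin n) = i := by
    apply Fin.ext; simp [hi0']
  rw [this, hxi]

/-- The standardization of a modified ascent sequence lies in `Ω_n`. -/
theorem std_modasc_mem_Omega {n : ℕ} (x : Fin n → ℕ) (hx : IsModasc x) :
    InOmega (Std x) := by
  classical
  refine ⟨⟨std_inj x, std_range x⟩, ?_, ?_⟩
  · intro h
    have hx0 : x ⟨0, h⟩ = 1 := first_eq_one hx h
    have e1 : (Finset.univ.filter fun j => x j < x ⟨0, h⟩) = ∅ := by
      apply Finset.filter_false_of_mem
      intro j _
      rw [hx0]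
      exact not_lt.mpr (val_ge_one hx.1 j)
    have e2 : (Finset.univ.filter fun j => j ≤ (⟨0, h⟩ : Fin n) ∧ x j = x ⟨0, h⟩)
        = {⟨0, h⟩} := by
      ext t
      simp only [Finset.mem_filter, Finset.mem_univ, true_and, Finset.mem_singleton]
      constructor
      · rintro ⟨ht, -⟩
        apply Fin.ext
        have := Fin.le_def.mp ht
        simpa using this
      · rintro rfl
        exact ⟨le_refl _, rfl⟩
    unfold Std
    rw [e1, e2]
    simp
  · rintro ⟨i, j, hi, hij, hdesc, heq⟩
    set a : Fin n := ⟨(i : ℕ) + 1, hi⟩ with hadef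
    have hia : i < a := by rw [Fin.lt_def]; simp [hadef]
    have haj : a < j := by rw [Fin.lt_def]; simpa [hadef] using hij
    -- x a < x i
    have hxa : x a < x i := by
      rcases lt_trichotomy (x a) (x i) with h | h | h
      · exact h
      · exact absurd hdesc (not_lt.mpr (std_lt_of_eq_lt x h.symm hia).le)
      · exact absurd hdesc (not_lt.mpr (std_lt_of_val_lt x h).le)
    -- x j < x a
    have hstdj : Std x j < Std x a := by omega
    have hxj : x j < x a := by
      rcases lt_trichotomy (x j) (x a) with h | h | h
      · exact h
      · exact absurd hstdj (not_lt.mpr (std_lt_of_eq_lt x h.symm haj).le)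
      · exact absurd hstdj (not_lt.mpr (std_lt_of_val_lt x h).le)
    -- a is not an ascent top hence not in Nub
    have hnotasc : a ∉ AscTops x := by
      intro hA
      have := hA i (by simp [hadef])
      omega
    have hnotnub : a ∉ Nub x := hx.2 ▸ hnotasc
    have hm : ∃ m : Fin n, m < a ∧ x m = x a := by
      by_contra hc
      push_neg at hc
      exact hnotnub (fun m hm' => hc m hm')
    obtain ⟨m, hma, hxm⟩ := hm
    -- card of second filter at a is ≥ 2
    have hcard2 : 2 ≤ (Finset.univ.filter fun t => t ≤ a ∧ x t = x a).card := by
      have : ({m, a} : Finset (Fin n)) ⊆ Finset.univ.filter fun t => t ≤ a ∧ x t = x a := by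
        intro t ht
        simp only [Finset.mem_insert, Finset.mem_singleton] at ht
        rcases ht with rfl | rfl
        · simp [hma.le, hxm]
        · simp
      have hc : ({m, a} : Finset (Fin n)).card = 2 :=
        Finset.card_pair (ne_of_lt hma)
      calc 2 = ({m, a} : Finset (Fin n)).card := hc.symm
        _ ≤ _ := Finset.card_le_card this
    have hle := std_le_aux x hxj
    have hstda : Std x a = (Finset.univ.filter fun t => x t < x a).card +
        (Finset.univ.filter fun t => t ≤ a ∧ x t = x a).card := rfl
    omega
end

section
/- Let p = p_1⋯p_n be a permutation in Ω_n. If i is an index with i ≥ 2 and p_{i-1} > p_i (so that p_i is not an ascent top), and j is the index with p_j = p_i − 1, then j < i. -/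
/-- In `p ∈ Ω_n`, if `p i` is not an ascent top (its predecessor entry
`p i'` with `i' + 1 = i` satisfies `p i' > p i`) and `p j = p i - 1`, then `j < i`. -/
theorem omega_chains {n : ℕ} (p : Fin n → ℕ) (hp : InOmega p) (i i' : Fin n)
    (hi' : (i' : ℕ) + 1 = (i : ℕ)) (hdes : p i < p i') (j : Fin n)
    (hj : p j + 1 = p i) :
    j < i := by
  by_contra h
  push_neg at h
  have hin : (i' : ℕ) + 1 < n := hi' ▸ i.isLt
  have hii : (⟨(i' : ℕ) + 1, hin⟩ : Fin n) = i := Fin.ext hi'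
  have hji : (i : ℕ) < (j : ℕ) := by
    rcases lt_or_eq_of_le h with h1 | h1
    · exact h1
    · exfalso; rw [← h1] at hj; omega
  exact hp.2.2 ⟨i', j, hin, by omega, by rw [hii]; exact hdes, by rw [hii]; omega⟩
end

section
/- For every permutation p in Ω_n, there exists a primitive modified ascent sequence x of length n such that st(x) = p. In other words, Ω_n ⊆ st(Prim_n). -/
namespace OmegaPrim

variable {n : ℕ}

/-- `v` is a descent bottom of `p`. -/
def DBot (p : Fin n → ℕ) (v : ℕ) : Prop :=
  ∃ i j : Fin n, (j : ℕ) + 1 = (i : ℕ) ∧ p i = v ∧ v < p j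

instance (p : Fin n → ℕ) (v : ℕ) : Decidable (DBot p v) := by
  unfold DBot; infer_instance

/-- block index of value `v` -/
def blk (p : Fin n → ℕ) (v : ℕ) : ℕ :=
  ((Finset.Icc 1 v).filter (fun u => ¬ DBot p u)).card

lemma blk_mono (p : Fin n → ℕ) : Monotone (blk p) := by
  intro u v huv
  exact Finset.card_le_card (Finset.filter_subset_filter _
    (Finset.Icc_subset_Icc le_rfl huv))

lemma blk_le (p : Fin n → ℕ) (v : ℕ) : blk p v ≤ v := by
  calc blk p v ≤ (Finset.Icc 1 v).card := Finset.card_le_card (Finset.filter_subset _ _)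
    _ = v := by simp

lemma blk_succ (p : Fin n → ℕ) (v : ℕ) :
    blk p (v + 1) = blk p v + (if DBot p (v+1) then 0 else 1) := by
  have h : Finset.Icc 1 (v+1) = insert (v+1) (Finset.Icc 1 v) := by
    ext a; simp [Nat.lt_succ_iff, Nat.le_succ_iff_eq_or_le]; omega
  rw [blk, h, Finset.filter_insert]
  by_cases hd : DBot p (v+1)
  · simp [hd, blk]
  · rw [if_pos hd, if_neg hd, Finset.card_insert_of_notMem (by simp), blk]

lemma blk_lt_of_not_dbot (p : Fin n → ℕ) {u v : ℕ} (huv : u < v) (hv : ¬ DBot p v) :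
    blk p u < blk p v := by
  obtain ⟨w, rfl⟩ : ∃ w, v = w + 1 := ⟨v - 1, by omega⟩
  have h1 : blk p u ≤ blk p w := blk_mono p (by omega)
  rw [blk_succ p w, if_neg hv]; omega

lemma blk_eq_of_dbot (p : Fin n → ℕ) {v : ℕ} (hv : DBot p (v+1)) :
    blk p (v+1) = blk p v := by
  rw [blk_succ p v, if_pos hv]; ring

lemma lt_of_blk_lt (p : Fin n → ℕ) {u v : ℕ} (h : blk p u < blk p v) : u < v := by
  by_contra hc
  exact absurd (blk_mono p (not_lt.mp hc)) (by omega)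

end OmegaPrim
namespace OmegaPrim

variable {n : ℕ} {p : Fin n → ℕ}

lemma mem_bound (hp : InOmega p) (i : Fin n) : 1 ≤ p i ∧ p i ≤ n := by
  have h : p i ∈ Set.range p := ⟨i, rfl⟩
  rw [hp.1.2] at h
  simpa using h

lemma surj_val (hp : InOmega p) {v : ℕ} (h1 : 1 ≤ v) (h2 : v ≤ n) :
    ∃ i, p i = v := by
  have h : v ∈ Set.range p := by rw [hp.1.2]; exact ⟨h1, h2⟩
  exact h

lemma dbot_two_le (hp : InOmega p) {v : ℕ} (hv : DBot p v) : 2 ≤ v := by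
  obtain ⟨i, j, hji, hpi, hlt⟩ := hv
  have h1 : 1 ≤ v := hpi ▸ (mem_bound hp i).1
  rcases Nat.lt_or_ge v 2 with h | h
  · -- v = 1
    have hv1 : v = 1 := by omega
    have hn : 0 < n := i.pos
    have hi0 : i = ⟨0, hn⟩ := hp.1.1 (by rw [hpi, hv1, hp.2.1 hn])
    exfalso
    rw [hi0] at hji
    simp at hji
  · exact h

end OmegaPrim
namespace OmegaPrim

variable {n : ℕ} {p : Fin n → ℕ}

/-- If `v` is a descent bottom, the value `v-1` occurs before `v`. -/
lemma pred_pos_lt (hp : InOmega p) {v : ℕ} (hv : DBot p v) {i j : Fin n}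
    (hi : p i = v) (hj : p j = v - 1) : j < i := by
  have h2 : 2 ≤ v := dbot_two_le hp hv
  obtain ⟨i', j', hji', hpi', hlt'⟩ := hv
  have hii : i = i' := (hp.1.1 (by rw [hpi', hi])).symm
  subst hii
  by_contra hc
  push_neg at hc
  have hne : i ≠ j := fun h => by rw [h, hj] at hi; omega
  have hij : i < j := lt_of_le_of_ne hc hne
  apply hp.2.2
  refine ⟨j', j, by omega, by omega, ?_, ?_⟩
  · have : (⟨(j' : ℕ) + 1, by omega⟩ : Fin n) = i := Fin.ext hji'
    rw [this, hi]; omega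
  · have : (⟨(j' : ℕ) + 1, by omega⟩ : Fin n) = i := Fin.ext hji'
    rw [this, hi, hj]; omega

/-- Within a block, positions increase with value. -/
lemma pos_lt_of_blk_eq (hp : InOmega p) :
    ∀ v u, u < v → blk p u = blk p v → ∀ i j : Fin n, p i = u → p j = v → i < j := by
  intro v
  induction v using Nat.strong_induction_on with
  | _ v IH =>
    intro u huv hblk i j hi hj
    have hdb : DBot p v := by
      by_contra hnd
      exact absurd hblk (Nat.ne_of_lt (blk_lt_of_not_dbot p huv hnd))
    have h2 : 2 ≤ v := dbot_two_le hp hdb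
    have hvn : v ≤ n := hj ▸ (mem_bound hp j).2
    obtain ⟨k, hk⟩ := surj_val hp (v := v - 1) (by omega) (by omega)
    have hkj : k < j := pred_pos_lt hp hdb hj hk
    rcases Nat.eq_or_lt_of_le (Nat.le_sub_one_of_lt huv) with he | hl
    · have : i = k := hp.1.1 (by rw [hi, hk, he])
      exact this ▸ hkj
    · have hv' : v - 1 + 1 = v := by omega
      have hbe : blk p (v - 1) = blk p v := by
        have h3 := blk_eq_of_dbot (p := p) (v := v - 1) (by rw [hv']; exact hdb)
        rw [hv'] at h3
        exact h3.symm
      have : blk p u = blk p (v - 1) := by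
        have h1 : blk p u ≤ blk p (v - 1) := blk_mono p (by omega)
        have h2' : blk p (v - 1) ≤ blk p v := blk_mono p (by omega)
        omega
      exact lt_trans (IH (v - 1) (by omega) u hl this i k hi hk) hkj

end OmegaPrim
namespace OmegaPrim

variable {n : ℕ} {p : Fin n → ℕ}

lemma not_dbot_one (hp : InOmega p) : ¬ DBot p 1 :=
  fun h => by have := dbot_two_le hp h; omega

lemma blk_one (hp : InOmega p) : blk p 1 = 1 := by
  simp [blk, Finset.Icc_self, Finset.filter_singleton, not_dbot_one hp]

lemma blk_pred_eq (hp : InOmega p) {v : ℕ} (hdb : DBot p v) :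
    blk p (v - 1) = blk p v := by
  have hv' : v - 1 + 1 = v := by have := dbot_two_le hp hdb; omega
  have h3 := blk_eq_of_dbot (p := p) (v := v - 1) (by rw [hv']; exact hdb)
  rw [hv'] at h3
  exact h3.symm

lemma asc_char (hp : InOmega p) {i j : Fin n} (hji : (j : ℕ) + 1 = (i : ℕ)) :
    blk p (p j) < blk p (p i) ↔ ¬ DBot p (p i) := by
  have hne : p j ≠ p i := fun he => by
    have := congrArg Fin.val (hp.1.1 he); omega
  constructor
  · intro h hdb
    obtain ⟨i', j', hji', hpi', hlt'⟩ := hdb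
    have hii : i' = i := hp.1.1 hpi'
    subst hii
    have hjj : j' = j := Fin.ext (by omega)
    subst hjj
    have := lt_of_blk_lt p h
    omega
  · intro hnd
    rcases lt_or_gt_of_ne hne with h | h
    · exact blk_lt_of_not_dbot p h hnd
    · exact absurd ⟨i, j, hji, rfl, h⟩ hnd

lemma nub_char (hp : InOmega p) (i : Fin n) :
    (∀ j, j < i → blk p (p j) ≠ blk p (p i)) ↔ ¬ DBot p (p i) := by
  constructor
  · intro hnub hdb
    have h2 : 2 ≤ p i := dbot_two_le hp hdb
    have hbn := mem_bound hp i
    obtain ⟨k, hk⟩ := surj_val hp (v := p i - 1) (by omega) (by omega)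
    have hki : k < i := pred_pos_lt hp hdb rfl hk
    apply hnub k hki
    rw [hk]
    exact blk_pred_eq hp hdb
  · intro hnd j hji hblk
    have hne : p j ≠ p i := fun he => absurd (hp.1.1 he) (ne_of_lt hji)
    rcases lt_or_gt_of_ne hne with h | h
    · exact absurd hblk (Nat.ne_of_lt (blk_lt_of_not_dbot p h hnd))
    · exact absurd (pos_lt_of_blk_eq hp (p j) (p i) h hblk.symm i j rfl rfl)
        (not_lt.mpr hji.le)

end OmegaPrim
/-- Every `p ∈ Ω_n` is the standardization of some primitive modified
ascent sequence of length `n`. -/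
theorem omega_subset_std_prim {n : ℕ} (p : Fin n → ℕ) (hp : InOmega p) :
    ∃ x : Fin n → ℕ, IsPrim x ∧ Std x = p := by
  open OmegaPrim in
  refine ⟨fun i => blk p (p i), ⟨⟨?_, ?_⟩, ?_⟩, ?_⟩
  · -- IsCayley
    rcases Nat.eq_zero_or_pos n with h0 | h0
    · subst h0
      refine ⟨0, le_rfl, ?_⟩
      rw [Set.range_eq_empty, Set.Icc_eq_empty (by omega)]
    · refine ⟨blk p n, blk_le p n, ?_⟩
      ext m
      simp only [Set.mem_range, Set.mem_Icc]
      constructor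
      · rintro ⟨i, rfl⟩
        have hb := mem_bound hp i
        exact ⟨le_trans (le_of_eq (blk_one hp).symm) (blk_mono p hb.1),
          blk_mono p hb.2⟩
      · rintro ⟨h1, h2⟩
        have hnS : n ∈ (Finset.Icc 1 n).filter (fun v => m ≤ blk p v) := by
          simp only [Finset.mem_filter, Finset.mem_Icc]
          exact ⟨⟨h0, le_rfl⟩, h2⟩
        have hne : ((Finset.Icc 1 n).filter (fun v => m ≤ blk p v)).Nonempty :=
          ⟨n, hnS⟩
        set v := ((Finset.Icc 1 n).filter (fun v => m ≤ blk p v)).min' hne with hv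
        have hvS := ((Finset.Icc 1 n).filter (fun v => m ≤ blk p v)).min'_mem hne
        rw [← hv] at hvS
        simp only [Finset.mem_filter, Finset.mem_Icc] at hvS
        obtain ⟨⟨hv1, hvn⟩, hmv⟩ := hvS
        have hvm : blk p v = m := by
          by_contra hc
          have hlt : m < blk p v := lt_of_le_of_ne hmv (Ne.symm hc)
          have hv2 : 2 ≤ v := by
            by_contra h
            have hvone : v = 1 := by omega
            rw [hvone, blk_one hp] at hlt
            omega
          have hstep : blk p v ≤ blk p (v - 1) + 1 := by
            have hv' : v - 1 + 1 = v := by omega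
            have hss := blk_succ p (v - 1)
            rw [hv'] at hss
            split_ifs at hss <;> omega
          have hmem : v - 1 ∈ (Finset.Icc 1 n).filter (fun v => m ≤ blk p v) := by
            simp only [Finset.mem_filter, Finset.mem_Icc]
            exact ⟨⟨by omega, by omega⟩, by omega⟩
          have := Finset.min'_le _ _ hmem
          rw [← hv] at this
          omega
        obtain ⟨i, hi⟩ := surj_val hp hv1 hvn
        exact ⟨i, by rw [hi, hvm]⟩
  · -- AscTops = Nub
    ext i
    simp only [AscTops, Nub, Set.mem_setOf_eq]
    constructor
    · intro hasc
      apply (nub_char hp i).mpr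
      rcases Nat.eq_zero_or_pos (i : ℕ) with h0 | h0
      · intro hdb
        obtain ⟨i', j', hji', hpi', _⟩ := hdb
        have hii : i' = i := hp.1.1 hpi'
        subst hii
        omega
      · have hji : ((⟨(i : ℕ) - 1, by omega⟩ : Fin n) : ℕ) + 1 = (i : ℕ) := by
          simp; omega
        exact (asc_char hp hji).mp (hasc _ hji)
    · intro hnub j hji
      exact (asc_char hp hji).mpr ((nub_char hp i).mp hnub)
  · -- NoFlat
    intro i j hji hxe
    have hne : p i ≠ p j := fun he => by
      have := congrArg Fin.val (hp.1.1 he); omega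
    rcases lt_or_gt_of_ne hne with h | h
    · have hdb : DBot p (p j) := by
        by_contra hnd
        exact absurd hxe (Nat.ne_of_lt (blk_lt_of_not_dbot p h hnd))
      obtain ⟨i', j', hji', hpi', hlt'⟩ := hdb
      have hii : i' = j := hp.1.1 hpi'
      subst hii
      have hjj : j' = i := Fin.ext (by omega)
      subst hjj
      omega
    · have := pos_lt_of_blk_eq hp (p i) (p j) h hxe.symm j i rfl rfl
      omega
  · -- Std = p
    funext i
    simp only [Std]
    have hbn := mem_bound hp i
    have hA : (Finset.univ.filter fun j => blk p (p j) < blk p (p i)) =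
        Finset.univ.filter (fun j => p j ≤ p i ∧ blk p (p j) < blk p (p i)) := by
      apply Finset.filter_congr
      intro j _
      exact ⟨fun h => ⟨(lt_of_blk_lt p h).le, h⟩, fun h => h.2⟩
    have hB : (Finset.univ.filter fun j => j ≤ i ∧ blk p (p j) = blk p (p i)) =
        Finset.univ.filter (fun j => p j ≤ p i ∧ ¬ blk p (p j) < blk p (p i)) := by
      apply Finset.filter_congr
      intro j _
      constructor
      · rintro ⟨hji, hbe⟩
        refine ⟨?_, by omega⟩
        by_contra hc
        push_neg at hc
        have := pos_lt_of_blk_eq hp (p j) (p i) hc hbe.symm i j rfl rfl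
        exact absurd hji (not_le.mpr this)
      · rintro ⟨hjb, hnl⟩
        rcases eq_or_lt_of_le hjb with he | hl
        · have hje : j = i := hp.1.1 he
          exact ⟨hje.le, by rw [he]⟩
        · have hle : blk p (p j) ≤ blk p (p i) := blk_mono p hjb
          have hbe : blk p (p j) = blk p (p i) := by omega
          exact ⟨(pos_lt_of_blk_eq hp (p i) (p j) hl hbe j i rfl rfl).le, by omega⟩
    rw [hA, hB]
    have hsum := Finset.card_filter_add_card_filter_not
      (s := Finset.univ.filter (fun j => p j ≤ p i))
      (p := fun j => blk p (p j) < blk p (p i))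
    rw [Finset.filter_filter, Finset.filter_filter] at hsum
    rw [hsum]
    have hicc : (Finset.Icc 1 (p i)).card = p i := by simp
    refine Eq.trans ?_ hicc
    apply Finset.card_bij (fun j _ => p j)
    · intro a ha
      simp only [Finset.mem_filter, Finset.mem_univ, true_and] at ha
      simp only [Finset.mem_Icc]
      exact ⟨(mem_bound hp a).1, ha⟩
    · intro a _ a' _ h
      exact hp.1.1 h
    · intro u hu
      simp only [Finset.mem_Icc] at hu
      obtain ⟨j, hj⟩ := surj_val hp hu.1 (le_trans hu.2 hbn.2)
      exact ⟨j, by simp only [Finset.mem_filter, Finset.mem_univ, true_and]; omega, hj⟩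
end

section
/- For every n ≥ 0, standardization is a bijection from the set Prim_n of primitive modified ascent sequences of length n onto the set Ω_n of permutations of {1,…,n} that start with 1 and avoid the bivincular pattern ω. -/
namespace Aux
open Finset

variable {n : ℕ} {x : Fin n → ℕ}

lemma std_lt_of_lt {i j : Fin n} (h : x i < x j) : Std x i < Std x j := by
  have hsub : ((univ.filter fun j' => x j' < x i) ∪ (univ.filter fun j' => j' ≤ i ∧ x j' = x i))
      ⊆ univ.filter fun j' => x j' < x j := by
    intro a ha
    simp only [mem_union, mem_filter, mem_univ, true_and] at ha ⊢
    rcases ha with h1 | h2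
    · omega
    · omega
  have hdisj : Disjoint (univ.filter fun j' => x j' < x i)
      (univ.filter fun j' => j' ≤ i ∧ x j' = x i) := by
    rw [Finset.disjoint_left]
    intro a ha hb
    simp only [mem_filter, mem_univ, true_and] at ha hb
    omega
  have h1 : Std x i ≤ (univ.filter fun j' => x j' < x j).card := by
    rw [Std, ← Finset.card_union_of_disjoint hdisj]
    exact Finset.card_le_card hsub
  have h2 : 0 < (univ.filter fun j' => j' ≤ j ∧ x j' = x j).card := by
    refine Finset.card_pos.2 ⟨j, ?_⟩
    simp
  simp only [Std] at h1 ⊢; omega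

lemma std_lt_of_eq_lt {i j : Fin n} (h : x i = x j) (hij : i < j) : Std x i < Std x j := by
  have hA : (univ.filter fun j' => x j' < x i) = (univ.filter fun j' => x j' < x j) := by
    rw [h]
  have hB : (univ.filter fun j' => j' ≤ i ∧ x j' = x i)
      ⊂ (univ.filter fun j' => j' ≤ j ∧ x j' = x j) := by
    rw [Finset.ssubset_iff_of_subset]
    · exact ⟨j, by simp [h.symm], by simp [Fin.not_le.2 hij]⟩
    · intro a ha
      simp only [mem_filter, mem_univ, true_and] at ha ⊢
      exact ⟨le_trans ha.1 hij.le, h ▸ ha.2⟩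
  have := Finset.card_lt_card hB
  rw [Std, Std, hA]; omega

lemma std_ge_one (i : Fin n) : 1 ≤ Std x i := by
  have h2 : 0 < (univ.filter fun j' => j' ≤ i ∧ x j' = x i).card :=
    Finset.card_pos.2 ⟨i, by simp⟩
  rw [Std]; omega

lemma std_le (i : Fin n) : Std x i ≤ n := by
  have hdisj : Disjoint (univ.filter fun j' => x j' < x i)
      (univ.filter fun j' => j' ≤ i ∧ x j' = x i) := by
    rw [Finset.disjoint_left]
    intro a ha hb
    simp only [mem_filter, mem_univ, true_and] at ha hb
    omega
  rw [Std, ← Finset.card_union_of_disjoint hdisj]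
  calc ((univ.filter fun j' => x j' < x i) ∪ (univ.filter fun j' => j' ≤ i ∧ x j' = x i)).card
      ≤ (univ : Finset (Fin n)).card := Finset.card_le_card (Finset.subset_univ _)
    _ = n := by simp

lemma std_injective : Function.Injective (Std x) := by
  intro i j hij
  by_contra hne
  rcases lt_trichotomy (x i) (x j) with h | h | h
  · exact absurd hij (std_lt_of_lt h).ne
  · rcases lt_trichotomy i j with h2 | h2 | h2
    · exact absurd hij (std_lt_of_eq_lt h h2).ne
    · exact hne h2
    · exact absurd hij.symm (std_lt_of_eq_lt h.symm h2).ne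
  · exact absurd hij.symm (std_lt_of_lt h).ne

lemma std_reflect {i j : Fin n} (h : Std x i < Std x j) :
    x i < x j ∨ (x i = x j ∧ i < j) := by
  rcases lt_trichotomy (x i) (x j) with h1 | h1 | h1
  · exact Or.inl h1
  · rcases lt_trichotomy i j with h2 | h2 | h2
    · exact Or.inr ⟨h1, h2⟩
    · subst h2; omega
    · exact absurd (std_lt_of_eq_lt h1.symm h2) (by omega)
  · exact absurd (std_lt_of_lt h1) (by omega)

lemma std_range : Set.range (Std x) = Set.Icc 1 n := by
  have himg : Finset.image (Std x) univ = Finset.Icc 1 n := by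
    apply Finset.eq_of_subset_of_card_le
    · intro v hv
      simp only [Finset.mem_image, mem_univ, true_and] at hv
      obtain ⟨i, rfl⟩ := hv
      simp only [Finset.mem_Icc]
      exact ⟨std_ge_one i, std_le i⟩
    · rw [Finset.card_image_of_injective _ std_injective]
      simp [Nat.card_Icc]
  have : Set.range (Std x) = ↑(Finset.image (Std x) univ) := by
    ext v; simp
  rw [this, himg, Finset.coe_Icc]


variable {n : ℕ} {x : Fin n → ℕ}


lemma cayley_ge_one (hc : IsCayley x) (i : Fin n) : 1 ≤ x i := by
  obtain ⟨k, _, hr⟩ := hc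
  have : x i ∈ Set.Icc 1 k := hr ▸ Set.mem_range_self i
  exact this.1

/-- every value in the range has a leftmost copy in `Nub`. -/
lemma exists_nub_copy (i : Fin n) : ∃ j : Fin n, j ∈ Nub x ∧ x j = x i := by
  classical
  have hne : (univ.filter fun j => x j = x i).Nonempty := ⟨i, by simp⟩
  obtain ⟨j, hj, hmin⟩ := Finset.exists_min_image _ id hne
  simp only [mem_filter, mem_univ, true_and] at hj
  refine ⟨j, ?_, hj⟩
  intro j' hj' heq
  have := hmin j' (by simp [heq, hj])
  simp only [id] at this
  exact absurd hj' (not_lt.2 this)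

lemma prim_first_one (hp : IsPrim x) (h : 0 < n) : x ⟨0, h⟩ = 1 := by
  obtain ⟨⟨hc, hmod⟩, hnf⟩ := hp
  obtain ⟨k, hk, hr⟩ := hc
  have h1 : (1 : ℕ) ∈ Set.range x := by
    have hx0 : x ⟨0, h⟩ ∈ Set.Icc 1 k := hr ▸ Set.mem_range_self _
    rw [hr]
    exact ⟨le_refl 1, le_trans hx0.1 hx0.2⟩
  obtain ⟨i, hi⟩ := h1
  obtain ⟨j, hjnub, hjval⟩ := exists_nub_copy (x := x) i
  rw [hi] at hjval
  -- j ∈ Nub = AscTops; if j ≠ 0 then predecessor value < 1, impossible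
  have hjasc : j ∈ AscTops x := hmod ▸ hjnub
  have hj0 : (j : ℕ) = 0 := by
    by_contra h0
    obtain ⟨m, hm⟩ := Nat.exists_eq_succ_of_ne_zero h0
    have hmlt : m < n := by omega
    have := hjasc ⟨m, hmlt⟩ (by simp [hm])
    have := cayley_ge_one ⟨k, hk, hr⟩ ⟨m, hmlt⟩
    omega
  have : j = ⟨0, h⟩ := Fin.ext hj0
  rw [← this, hjval]

lemma std_first_one (hp : IsPrim x) (h : 0 < n) : Std x ⟨0, h⟩ = 1 := by
  have hx0 : x ⟨0, h⟩ = 1 := prim_first_one hp h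
  have hA : (univ.filter fun j => x j < x ⟨0, h⟩) = ∅ := by
    rw [Finset.filter_eq_empty_iff]
    intro j _
    have := cayley_ge_one hp.1.1 j
    omega
  have hB : (univ.filter fun j => j ≤ ⟨0, h⟩ ∧ x j = x ⟨0, h⟩) = {⟨0, h⟩} := by
    ext j
    simp only [mem_filter, mem_univ, true_and, Finset.mem_singleton]
    constructor
    · rintro ⟨hj, -⟩
      exact le_antisymm hj (Fin.mk_le_of_le_val (Nat.zero_le _))
    · rintro rfl; simp
  rw [Std, hA, hB]; simp

lemma std_avoids (hp : IsPrim x) : ¬ ContainsOmega (Std x) := by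
  rintro ⟨i, j, hi, hij, hdesc, hval⟩
  obtain ⟨⟨hc, hmod⟩, hnf⟩ := hp
  set i1 : Fin n := ⟨(i : ℕ) + 1, hi⟩ with hi1
  -- x i1 < x i
  have hxle : x i1 < x i := by
    rcases std_reflect hdesc with h | ⟨h, hlt⟩
    · exact h
    · exact absurd h.symm (hnf i i1 rfl)
  -- i1 not an ascent top, hence not in nub: earlier copy j' < i1 with same value
  have hnotasc : i1 ∉ AscTops x := by
    intro hasc
    have := hasc i rfl
    omega
  have hnotnub : i1 ∉ Nub x := hmod ▸ hnotasc
  simp only [Nub, Set.mem_setOf_eq, not_forall] at hnotnub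
  obtain ⟨j', hj'lt, hj'eq⟩ := hnotnub
  rw [not_not] at hj'eq
  -- Std x j < Std x i1, so x j < x i1 or (x j = x i1 with j < i1)
  have hlt2 : Std x j < Std x i1 := by omega
  rcases std_reflect hlt2 with h | ⟨h, hlt⟩
  · -- x j < x i1 = x j'. Then Std x j < Std x j' < Std x i1 : contradiction with consecutive
    have h1 : Std x j < Std x j' := std_lt_of_lt (by omega)
    have h2 : Std x j' < Std x i1 := std_lt_of_eq_lt hj'eq hj'lt
    omega
  · have : (j : ℕ) < (i : ℕ) + 1 := hlt
    omega

lemma std_mapsTo (hp : IsPrim x) : InOmega (Std x) :=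
  ⟨⟨std_injective, std_range⟩, fun h => std_first_one hp h, std_avoids hp⟩



/-- `u` is a "starter" value of `p`: it occurs at an ascent-top position. -/
def Starter {n : ℕ} (p : Fin n → ℕ) (u : ℕ) : Prop :=
  ∃ j : Fin n, p j = u ∧ ∀ j' : Fin n, (j' : ℕ) + 1 = (j : ℕ) → p j' < p j

open Classical in
/-- number of starter values `≤ v`. -/
noncomputable def cc {n : ℕ} (p : Fin n → ℕ) (v : ℕ) : ℕ :=
  ((Finset.Icc 1 v).filter fun u => Starter p u).card

/-- the inverse of standardization. -/
noncomputable def F {n : ℕ} (p : Fin n → ℕ) : Fin n → ℕ := fun i => cc p (p i)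

variable {n : ℕ} {x : Fin n → ℕ}

lemma starter_std_iff (hp : IsPrim x) (j : Fin n) :
    Starter (Std x) (Std x j) ↔ j ∈ Nub x := by
  obtain ⟨⟨hc, hmod⟩, hnf⟩ := hp
  constructor
  · rintro ⟨j0, hj0, hasc⟩
    obtain rfl : j = j0 := (std_injective hj0).symm
    rw [← hmod]
    intro j' hj'
    rcases std_reflect (hasc j' hj') with h | ⟨h, -⟩
    · exact h
    · exact absurd h (hnf j' j hj'.symm)
  · intro hnub
    refine ⟨j, rfl, fun j' hj' => ?_⟩
    have hasc : j ∈ AscTops x := hmod ▸ hnub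
    exact std_lt_of_lt (hasc j' hj')

lemma F_std (hp : IsPrim x) : F (Std x) = x := by
  classical
  funext i
  set p := Std x with hpdef
  obtain ⟨⟨hc, hmod⟩, hnf⟩ := hp
  have key : ((Finset.Icc 1 (p i)).filter fun u => Starter p u)
      = (univ.filter fun j => j ∈ Nub x ∧ p j ≤ p i).image p := by
    ext u
    simp only [Finset.mem_filter, Finset.mem_Icc, Finset.mem_image, mem_univ, true_and]
    constructor
    · rintro ⟨⟨h1, h2⟩, hst⟩
      obtain ⟨j, hj, hasc⟩ := hst
      refine ⟨j, ⟨?_, by omega⟩, hj⟩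
      have : Starter p (p j) := ⟨j, rfl, hasc⟩
      exact (starter_std_iff ⟨⟨hc, hmod⟩, hnf⟩ j).1 this
    · rintro ⟨j, ⟨hnub, hle⟩, rfl⟩
      exact ⟨⟨std_ge_one j, hle⟩, (starter_std_iff ⟨⟨hc, hmod⟩, hnf⟩ j).2 hnub⟩
  have hcard : ((univ.filter fun j => j ∈ Nub x ∧ p j ≤ p i).image p).card
      = (univ.filter fun j => j ∈ Nub x ∧ p j ≤ p i).card :=
    Finset.card_image_of_injective _ std_injective
  -- now biject the nub-filter with Icc 1 (x i) via x
  have hbij : (univ.filter fun j => j ∈ Nub x ∧ p j ≤ p i).card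
      = (Finset.Icc 1 (x i)).card := by
    apply Finset.card_bij (fun j _ => x j)
    · intro j hj
      simp only [mem_filter, mem_univ, true_and] at hj
      obtain ⟨hnub, hle⟩ := hj
      simp only [Finset.mem_Icc]
      refine ⟨cayley_ge_one hc j, ?_⟩
      rcases eq_or_lt_of_le hle with h | h
      · have : j = i := std_injective h
        subst this; exact le_refl _
      · rcases std_reflect h with h' | ⟨h', -⟩
        · exact h'.le
        · exact h'.le
    · intro j1 hj1 j2 hj2 heq
      simp only [mem_filter, mem_univ, true_and] at hj1 hj2
      by_contra hne
      rcases lt_or_gt_of_ne hne with h | h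
      · exact hj2.1 j1 h heq
      · exact hj1.1 j2 h heq.symm
    · intro v hv
      simp only [Finset.mem_Icc] at hv
      obtain ⟨k, hk, hr⟩ := hc
      have hvr : v ∈ Set.range x := by
        rw [hr]
        have hxi : x i ∈ Set.Icc 1 k := hr ▸ Set.mem_range_self i
        exact ⟨hv.1, le_trans hv.2 hxi.2⟩
      obtain ⟨i', hi'⟩ := hvr
      obtain ⟨j, hjnub, hjval⟩ := exists_nub_copy (x := x) i'
      rw [hi'] at hjval
      refine ⟨j, ?_, hjval⟩
      simp only [mem_filter, mem_univ, true_and]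
      refine ⟨hjnub, ?_⟩
      rcases lt_trichotomy (x j) (x i) with h | h | h
      · exact (std_lt_of_lt h).le
      · -- same value: j must be ≤ i (j is the leftmost copy)
        rcases lt_trichotomy j i with h2 | h2 | h2
        · exact (std_lt_of_eq_lt h h2).le
        · subst h2; exact le_refl _
        · exact absurd h.symm (hjnub i h2)
      · omega
  have : F p i = ((Finset.Icc 1 (p i)).filter fun u => Starter p u).card := rfl
  rw [this, key, hcard, hbij, Nat.card_Icc]
  omega


section Omega

variable {n : ℕ} {p : Fin n → ℕ}
  (hinj : Function.Injective p) (hrange : Set.range p = Set.Icc 1 n)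
  (h0 : ∀ h : 0 < n, p ⟨0, h⟩ = 1) (hω : ¬ ContainsOmega p)

include hinj hrange h0 hω

lemma p_ge_one (j : Fin n) : 1 ≤ p j := by
  have : p j ∈ Set.Icc 1 n := hrange ▸ Set.mem_range_self j
  exact this.1

lemma p_le (j : Fin n) : p j ≤ n := by
  have : p j ∈ Set.Icc 1 n := hrange ▸ Set.mem_range_self j
  exact this.2

lemma exists_pos {u : ℕ} (h1 : 1 ≤ u) (h2 : u ≤ n) : ∃ j : Fin n, p j = u := by
  have : u ∈ Set.range p := hrange ▸ Set.mem_Icc.2 ⟨h1, h2⟩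
  obtain ⟨j, hj⟩ := this
  exact ⟨j, hj⟩

lemma starter_iff (j : Fin n) :
    Starter p (p j) ↔ ∀ j' : Fin n, (j' : ℕ) + 1 = (j : ℕ) → p j' < p j := by
  constructor
  · rintro ⟨j0, hj0, hprop⟩
    obtain rfl : j = j0 := (hinj hj0).symm
    exact hprop
  · intro h
    exact ⟨j, rfl, h⟩

lemma starter_one (hn : 0 < n) : Starter p 1 := by
  refine ⟨⟨0, hn⟩, h0 hn, fun j' hj' => ?_⟩
  simp at hj'

lemma starter_ge_one {u : ℕ} (h : Starter p u) (hr : ∀ j, 1 ≤ p j) : 1 ≤ u := by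
  obtain ⟨j, hj, -⟩ := h
  exact hj ▸ hr j

lemma cc_mono {v w : ℕ} (h : v ≤ w) : cc p v ≤ cc p w := by
  unfold cc
  apply Finset.card_le_card
  intro u hu
  simp only [Finset.mem_filter, Finset.mem_Icc] at hu ⊢
  exact ⟨⟨hu.1.1, le_trans hu.1.2 h⟩, hu.2⟩

lemma cc_lt {v w u : ℕ} (hu1 : v < u) (hu2 : u ≤ w) (hst : Starter p u) :
    cc p v < cc p w := by
  unfold cc
  apply Finset.card_lt_card
  rw [Finset.ssubset_iff_of_subset]
  · refine ⟨u, ?_, ?_⟩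
    · simp only [Finset.mem_filter, Finset.mem_Icc]
      exact ⟨⟨starter_ge_one hinj hrange h0 hω hst (p_ge_one hinj hrange h0 hω), hu2⟩, hst⟩
    · simp only [Finset.mem_filter, Finset.mem_Icc]
      intro h; omega
  · intro a ha
    simp only [Finset.mem_filter, Finset.mem_Icc] at ha ⊢
    exact ⟨⟨ha.1.1, by omega⟩, ha.2⟩

lemma cc_eq {v w : ℕ} (hvw : v ≤ w) (h : ∀ u, v < u → u ≤ w → ¬ Starter p u) :
    cc p v = cc p w := by
  unfold cc
  congr 1
  ext u
  simp only [Finset.mem_filter, Finset.mem_Icc]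
  constructor
  · rintro ⟨⟨h1, h2⟩, hst⟩
    exact ⟨⟨h1, le_trans h2 hvw⟩, hst⟩
  · rintro ⟨⟨h1, h2⟩, hst⟩
    refine ⟨⟨h1, ?_⟩, hst⟩
    by_contra hc
    exact h u (by omega) h2 hst

lemma exists_starter_of_cc_lt {v w : ℕ} (h : cc p v < cc p w) :
    ∃ u, v < u ∧ u ≤ w ∧ Starter p u := by
  by_contra hc
  push_neg at hc
  rcases le_or_gt v w with hvw | hvw
  · exact absurd (cc_eq hinj hrange h0 hω hvw fun u h1 h2 => hc u h1 h2) (by omega)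
  · exact absurd (cc_mono hinj hrange h0 hω hvw.le) (by omega)

lemma value_one_pos {j : Fin n} (hj : p j = 1) : (j : ℕ) = 0 := by
  have hn : 0 < n := j.pos
  have := h0 hn
  have hje : j = ⟨0, hn⟩ := hinj (by rw [hj, this])
  simp [hje]

lemma claimA {j : Fin n} (hns : ¬ Starter p (p j)) :
    ∃ j' : Fin n, p j' = p j - 1 ∧ j' < j := by
  obtain ⟨i', hi'1, hi'2⟩ : ∃ i' : Fin n, (i' : ℕ) + 1 = (j : ℕ) ∧ p j < p i' := by
    by_contra hcon
    push_neg at hcon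
    refine hns ((starter_iff hinj hrange h0 hω j).2 fun j' hj' => ?_)
    have hle := hcon j' hj'
    have hne : p j' ≠ p j := fun h => by
      have : j' = j := hinj h
      rw [this] at hj'; omega
    omega
  have h2 : 2 ≤ p j := by
    have h1 := p_ge_one hinj hrange h0 hω j
    by_contra hc
    have : p j = 1 := by omega
    have := value_one_pos hinj hrange h0 hω this
    omega
  obtain ⟨j'', hj''⟩ := exists_pos hinj hrange h0 hω (u := p j - 1) (by omega) (by have := p_le hinj hrange h0 hω j; omega)
  have hne : j'' ≠ j := fun h => by rw [h] at hj''; omega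
  rcases lt_or_gt_of_ne hne with hlt | hgt
  · exact ⟨j'', hj'', hlt⟩
  · exfalso
    apply hω
    have hival : (i' : ℕ) + 1 < n := by rw [hi'1]; exact j.isLt
    refine ⟨i', j'', hival, ?_, ?_, ?_⟩
    · have : (j : ℕ) < (j'' : ℕ) := hgt
      omega
    · have hj_eq : (⟨(i' : ℕ) + 1, hival⟩ : Fin n) = j := Fin.ext hi'1
      rw [hj_eq]; exact hi'2
    · have hj_eq : (⟨(i' : ℕ) + 1, hival⟩ : Fin n) = j := Fin.ext hi'1
      rw [hj_eq, hj'']; omega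

lemma cc_pred {j : Fin n} (hns : ¬ Starter p (p j)) :
    cc p (p j - 1) = cc p (p j) := by
  apply cc_eq hinj hrange h0 hω (by omega)
  intro u h1 h2 hst
  have : u = p j := by omega
  exact hns (this ▸ hst)

lemma claimB : ∀ d : ℕ, ∀ i j : Fin n, p j - p i = d → p i < p j →
    cc p (p i) = cc p (p j) → i < j := by
  intro d
  induction d using Nat.strong_induction_on with
  | _ d ih =>
    intro i j hd hlt heq
    have hns : ¬ Starter p (p j) := fun hst =>
      absurd heq (ne_of_lt (cc_lt hinj hrange h0 hω hlt (le_refl _) hst))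
    obtain ⟨j', hj'v, hj'lt⟩ := claimA hinj hrange h0 hω hns
    by_cases hc : p i = p j - 1
    · have : p j' = p i := by omega
      have : j' = i := hinj this
      rw [← this]; exact hj'lt
    · have h1 : p i < p j' := by omega
      have h2 : cc p (p j') = cc p (p j) := by rw [hj'v]; exact cc_pred hinj hrange h0 hω hns
      have h3 : cc p (p i) = cc p (p j') := heq.trans h2.symm
      have hdlt : p j' - p i < d := by omega
      exact (ih _ hdlt i j' rfl h1 h3).trans hj'lt

lemma F_noflat : NoFlat (F p) := by
  intro i j hij heq
  have hne : p i ≠ p j := by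
    intro h
    have := hinj h
    rw [this] at hij
    omega
  rcases lt_or_gt_of_ne hne with hlt | hgt
  · have hst : Starter p (p j) := by
      refine (starter_iff hinj hrange h0 hω j).2 fun j' hj' => ?_
      have : j' = i := Fin.ext (by omega)
      rw [this]; exact hlt
    exact absurd heq (ne_of_lt (cc_lt hinj hrange h0 hω hlt (le_refl _) hst))
  · have hlt2 := claimB hinj hrange h0 hω (p i - p j) j i rfl hgt heq.symm
    have : (j : ℕ) < (i : ℕ) := hlt2
    omega

lemma cc_zero : cc p 0 = 0 := by
  unfold cc
  simp

lemma cc_one (hn : 0 < n) : cc p 1 = 1 := by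
  unfold cc
  rw [Finset.Icc_self, Finset.filter_singleton, if_pos (starter_one hinj hrange h0 hω hn)]
  simp

lemma cc_step (u : ℕ) : cc p (u + 1) ≤ cc p u + 1 := by
  unfold cc
  have hins : Finset.Icc 1 (u + 1) = insert (u + 1) (Finset.Icc 1 u) := by
    ext a
    simp only [Finset.mem_Icc, Finset.mem_insert]
    omega
  rw [hins, Finset.filter_insert]
  split
  · exact Finset.card_insert_le _ _
  · exact Nat.le_succ _

lemma nat_ivt (f : ℕ → ℕ) (hstep : ∀ u, f (u + 1) ≤ f u + 1) :
    ∀ b a v, a ≤ b → f a ≤ v → v ≤ f b → ∃ u, a ≤ u ∧ u ≤ b ∧ f u = v := by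
  intro b
  induction b with
  | zero =>
    intro a v hab h1 h2
    have ha : a = 0 := by omega
    subst ha
    exact ⟨0, le_refl _, le_refl _, le_antisymm h1 h2⟩
  | succ b ih =>
    intro a v hab h1 h2
    by_cases ha : a = b + 1
    · subst ha
      exact ⟨b + 1, le_refl _, le_refl _, le_antisymm h1 h2⟩
    · have hab' : a ≤ b := by omega
      by_cases hv : v ≤ f b
      · obtain ⟨u, h3, h4, h5⟩ := ih a v hab' h1 hv
        exact ⟨u, h3, by omega, h5⟩
      · have hst := hstep b
        have hfv : f (b + 1) = v := by omega
        exact ⟨b + 1, by omega, le_refl _, hfv⟩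

lemma F_cayley : IsCayley (F p) := by
  refine ⟨cc p n, ?_, ?_⟩
  · unfold cc
    refine le_trans (@Finset.card_filter_le ℕ (Finset.Icc 1 n) (fun u => Starter p u)
      (fun u => Classical.propDecidable _)) ?_
    rw [Nat.card_Icc]; omega
  · ext v
    simp only [Set.mem_range, Set.mem_Icc]
    constructor
    · rintro ⟨i, rfl⟩
      have hn : 0 < n := i.pos
      constructor
      · have l1 := cc_one hinj hrange h0 hω hn
        have l2 := cc_mono hinj hrange h0 hω (p_ge_one hinj hrange h0 hω i)
        show 1 ≤ cc p (p i)
        omega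
      · exact cc_mono hinj hrange h0 hω (p_le hinj hrange h0 hω i)
    · rintro ⟨h1, h2⟩
      have hn : 0 < n := by
        rcases Nat.eq_zero_or_pos n with rfl | hn
        · have : cc p 0 = 0 := cc_zero hinj hrange h0 hω
          omega
        · exact hn
      obtain ⟨u, hu1, hu2, hu3⟩ := nat_ivt hinj hrange h0 hω (cc p)
        (cc_step hinj hrange h0 hω) n 1 v hn
        (by rw [cc_one hinj hrange h0 hω hn]; exact h1) h2
      obtain ⟨j, hj⟩ := exists_pos hinj hrange h0 hω hu1 hu2
      refine ⟨j, ?_⟩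
      show cc p (p j) = v
      rw [hj, hu3]

lemma F_asctops : AscTops (F p) = Nub (F p) := by
  ext i
  simp only [AscTops, Nub, Set.mem_setOf_eq]
  constructor
  · intro hasc j hlt heq
    have hst : Starter p (p i) := by
      refine (starter_iff hinj hrange h0 hω i).2 fun j' hj' => ?_
      have h := hasc j' hj'
      by_contra hc
      push_neg at hc
      have := cc_mono hinj hrange h0 hω hc
      have hh : cc p (p j') < cc p (p i) := h
      omega
    have hne : p j ≠ p i := fun h => absurd (hinj h ▸ hlt) (lt_irrefl _)
    have heq' : cc p (p j) = cc p (p i) := heq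
    rcases lt_or_gt_of_ne hne with h | h
    · exact absurd heq' (ne_of_lt (cc_lt hinj hrange h0 hω h (le_refl _) hst))
    · have := claimB hinj hrange h0 hω (p j - p i) i j rfl h heq'.symm
      exact absurd this (not_lt.2 hlt.le)
  · intro hnub j' hj'
    show cc p (p j') < cc p (p i)
    rcases lt_trichotomy (cc p (p j')) (cc p (p i)) with h | h | h
    · exact h
    · exfalso
      have hjlt : j' < i := by
        rw [Fin.lt_def]; omega
      exact hnub j' hjlt h
    · exfalso
      have hpi : p i < p j' := by
        by_contra hc
        push_neg at hc
        have := cc_mono hinj hrange h0 hω hc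
        omega
      have hns : ¬ Starter p (p i) := fun hst => by
        have hprop := (starter_iff hinj hrange h0 hω i).1 hst
        exact absurd (hprop j' hj') (by omega)
      obtain ⟨j'', hj''v, hj''lt⟩ := claimA hinj hrange h0 hω hns
      have : cc p (p j'') = cc p (p i) := by
        rw [hj''v]; exact cc_pred hinj hrange h0 hω hns
      exact hnub j'' hj''lt this

lemma F_prim : IsPrim (F p) :=
  ⟨⟨F_cayley hinj hrange h0 hω, F_asctops hinj hrange h0 hω⟩, F_noflat hinj hrange h0 hω⟩

lemma card_filter_comp (P : ℕ → Prop) [DecidablePred P] :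
    (univ.filter fun j => P (p j)).card = ((Finset.Icc 1 n).filter P).card := by
  apply Finset.card_bij (fun j _ => p j)
  · intro j hj
    simp only [mem_filter, mem_univ, true_and] at hj
    simp only [Finset.mem_filter, Finset.mem_Icc]
    exact ⟨⟨p_ge_one hinj hrange h0 hω j, p_le hinj hrange h0 hω j⟩, hj⟩
  · intro a _ b _ h
    exact hinj h
  · intro u hu
    simp only [Finset.mem_filter, Finset.mem_Icc] at hu
    obtain ⟨⟨h1, h2⟩, h3⟩ := hu
    obtain ⟨j, hj⟩ := exists_pos hinj hrange h0 hω h1 h2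
    exact ⟨j, by simp only [mem_filter, mem_univ, true_and]; rw [hj]; exact h3, hj⟩

lemma std_F : Std (F p) = p := by
  classical
  funext i
  have hn : 0 < n := i.pos
  have hTne : ((Finset.Icc 1 (p i)).filter fun u => Starter p u).Nonempty := by
    refine ⟨1, ?_⟩
    simp only [Finset.mem_filter, Finset.mem_Icc]
    exact ⟨⟨le_refl _, p_ge_one hinj hrange h0 hω i⟩, starter_one hinj hrange h0 hω hn⟩
  set s := ((Finset.Icc 1 (p i)).filter fun u => Starter p u).max' hTne with hs
  have hsmem := Finset.max'_mem _ hTne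
  rw [Finset.mem_filter, Finset.mem_Icc] at hsmem
  obtain ⟨⟨hs1, hs2⟩, hsst⟩ := hsmem
  have hsmax : ∀ u, s < u → u ≤ p i → ¬ Starter p u := by
    intro u h1 h2 hst
    have hmem : u ∈ (Finset.Icc 1 (p i)).filter fun u => Starter p u := by
      simp only [Finset.mem_filter, Finset.mem_Icc]
      exact ⟨⟨by omega, h2⟩, hst⟩
    have := Finset.le_max' _ u hmem
    omega
  have hccs : cc p s = cc p (p i) := cc_eq hinj hrange h0 hω hs2 hsmax
  have hlt_iff : ∀ v, cc p v < cc p (p i) ↔ v < s := by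
    intro v
    constructor
    · intro h
      by_contra hc
      push_neg at hc
      have := cc_mono hinj hrange h0 hω hc
      omega
    · intro h
      exact cc_lt hinj hrange h0 hω h hs2 hsst
  have hA : (univ.filter fun j => F p j < F p i) = (univ.filter fun j => p j < s) := by
    ext j
    simp only [mem_filter, mem_univ, true_and]
    exact hlt_iff (p j)
  have hB : (univ.filter fun j => j ≤ i ∧ F p j = F p i)
      = (univ.filter fun j => s ≤ p j ∧ p j ≤ p i) := by
    ext j
    simp only [mem_filter, mem_univ, true_and]
    constructor
    · rintro ⟨hle, heq⟩
      have heq' : cc p (p j) = cc p (p i) := heq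
      rcases eq_or_lt_of_le hle with rfl | hlt
      · exact ⟨hs2, le_refl _⟩
      · have hne : p j ≠ p i := fun h => absurd (hinj h ▸ hlt) (lt_irrefl _)
        have hplt : p j < p i := by
          rcases lt_or_gt_of_ne hne with h | h
          · exact h
          · exact absurd (claimB hinj hrange h0 hω (p j - p i) i j rfl h heq'.symm)
              (not_lt.2 hlt.le)
        refine ⟨?_, hplt.le⟩
        by_contra hc
        push_neg at hc
        exact absurd ((hlt_iff (p j)).2 hc) (by omega)
    · rintro ⟨h1, h2⟩
      have l1 := cc_mono hinj hrange h0 hω h1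
      have l2 := cc_mono hinj hrange h0 hω h2
      have hcc : cc p (p j) = cc p (p i) := by omega
      refine ⟨?_, hcc⟩
      rcases eq_or_lt_of_le h2 with h | h
      · exact (hinj h).le
      · exact (claimB hinj hrange h0 hω (p i - p j) j i rfl h hcc).le
  have hsn : s ≤ n := le_trans hs2 (p_le hinj hrange h0 hω i)
  have hAcard : (univ.filter fun j => p j < s).card = s - 1 := by
    rw [card_filter_comp hinj hrange h0 hω (fun u => u < s)]
    have hset : (Finset.Icc 1 n).filter (fun u => u < s) = Finset.Icc 1 (s - 1) := by
      ext u
      simp only [Finset.mem_filter, Finset.mem_Icc]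
      omega
    rw [hset, Nat.card_Icc]
    omega
  have hBcard : (univ.filter fun j => s ≤ p j ∧ p j ≤ p i).card = p i + 1 - s := by
    rw [card_filter_comp hinj hrange h0 hω (fun u => s ≤ u ∧ u ≤ p i)]
    have hset : (Finset.Icc 1 n).filter (fun u => s ≤ u ∧ u ≤ p i) = Finset.Icc s (p i) := by
      ext u
      simp only [Finset.mem_filter, Finset.mem_Icc]
      have := p_le hinj hrange h0 hω i
      omega
    rw [hset, Nat.card_Icc]
  have hstd : Std (F p) i = (univ.filter fun j => F p j < F p i).card
      + (univ.filter fun j => j ≤ i ∧ F p j = F p i).card := rfl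
  rw [hstd, hA, hB, hAcard, hBcard]
  omega

end Omega
end Aux

/-- Standardization is a bijection from `Prim_n` onto `Ω_n`. -/
theorem std_bijOn_prim_Omega (n : ℕ) :
    Set.BijOn (fun x => Std x) {x : Fin n → ℕ | IsPrim x}
      {p : Fin n → ℕ | InOmega p} := by
  have hmt : Set.MapsTo (fun x => Std x) {x : Fin n → ℕ | IsPrim x}
      {p : Fin n → ℕ | InOmega p} := fun x hx => Aux.std_mapsTo hx
  have hmt' : Set.MapsTo (Aux.F) {p : Fin n → ℕ | InOmega p}
      {x : Fin n → ℕ | IsPrim x} := fun p hp =>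
    Aux.F_prim hp.1.1 hp.1.2 hp.2.1 hp.2.2
  refine Set.InvOn.bijOn ⟨?_, ?_⟩ hmt hmt'
  · intro x hx
    exact Aux.F_std hx
  · intro p hp
    exact Aux.std_F hp.1.1 hp.1.2 hp.2.1 hp.2.2
end

section
/- For every n ≥ 1, the number of modified ascent sequences of length n that avoid the pattern 122 equals Σ_{k=1}^n k^{n-k}. -/
namespace Aux

variable {n : ℕ}

def oc (x : Fin n → ℕ) : ℕ := (Finset.univ.filter fun j => x j = 1).card

def Q (x : Fin n → ℕ) : Prop :=
  (∀ i, 1 ≤ x i) ∧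
  (∀ i : Fin n, (i : ℕ) = 0 → x i = 1) ∧
  (∀ i j : Fin n, i < j → x i = x j → x i = 1) ∧
  (∀ i j : Fin n, (j : ℕ) + 1 = (i : ℕ) → 2 ≤ x i → x j < x i) ∧
  (∀ i : Fin n, 2 ≤ x i → ∃ j, x j + 1 = x i)

theorem exists_pos_s9 {x : Fin n → ℕ} (h1 : ∀ i, 1 ≤ x i)
    (h4 : ∀ i : Fin n, 2 ≤ x i → ∃ j, x j + 1 = x i) :
    ∀ d w, 1 ≤ w → (∃ i, x i = w + d) → ∃ j, x j = w := by
  intro d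
  induction d with
  | zero => intro w _ h; exact h
  | succ d ih =>
    intro w hw ⟨i, hi⟩
    have h2 : 2 ≤ x i := by omega
    obtain ⟨j, hj⟩ := h4 i h2
    exact ih w hw ⟨j, by omega⟩

theorem char (hn : 1 ≤ n) (x : Fin n → ℕ) :
    (IsModasc x ∧ Avoids x ![1, 2, 2]) ↔ Q x := by
  classical
  constructor
  · rintro ⟨⟨⟨k, hk, hrange⟩, hAN⟩, hav⟩
    have hmem : ∀ i, x i ∈ Set.Icc 1 k := fun i => hrange ▸ Set.mem_range_self i
    have h1 : ∀ i, 1 ≤ x i := fun i => (hmem i).1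
    -- first entry is 1
    have hone : ∃ p : Fin n, x p = 1 := by
      have hk1 : 1 ≤ k := by
        have := h1 ⟨0, hn⟩
        have := (hmem ⟨0, hn⟩).2
        omega
      have : (1 : ℕ) ∈ Set.Icc 1 k := ⟨le_refl 1, hk1⟩
      rw [← hrange] at this
      exact this
    have h0 : ∀ i : Fin n, (i : ℕ) = 0 → x i = 1 := by
      obtain ⟨p0, hp0⟩ := hone
      set s : Finset (Fin n) := Finset.univ.filter fun j => x j = 1 with hs
      have hsne : s.Nonempty := ⟨p0, by simp [hs, hp0]⟩
      set p := s.min' hsne with hp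
      have hxp : x p = 1 := by
        have := s.min'_mem hsne
        simp [hs] at this
        exact this
      have hplt : ∀ j : Fin n, j < p → x j ≠ 1 := by
        intro j hj hxj
        have : p ≤ j := s.min'_le j (by simp [hs, hxj])
        exact absurd hj (not_lt.mpr this)
      have hpNub : p ∈ Nub x := by
        intro j hj
        rw [hxp]
        exact hplt j hj
      have hpAsc : p ∈ AscTops x := by rw [hAN]; exact hpNub
      have hp0' : (p : ℕ) = 0 := by
        by_contra hne
        have hlt : (p : ℕ) - 1 < n := by omega
        have := hpAsc ⟨(p : ℕ) - 1, hlt⟩ (by simp; omega)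
        have := h1 ⟨(p : ℕ) - 1, hlt⟩
        omega
      intro i hi
      have : i = p := Fin.ext (by omega)
      rw [this, hxp]
    -- distinctness of values ≥ 2
    have h2 : ∀ i j : Fin n, i < j → x i = x j → x i = 1 := by
      intro i j hij heq
      by_contra hne
      have hxi2 : 2 ≤ x i := by have := h1 i; omega
      have hipos : (0 : ℕ) < (i : ℕ) := by
        rcases Nat.eq_zero_or_pos (i : ℕ) with h | h
        · rw [h0 i h] at hxi2; omega
        · exact h
      apply hav
      refine ⟨![⟨0, hn⟩, i, j], ?_, ?_⟩
      · intro a b hab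
        have hab' : (a : ℕ) < (b : ℕ) := hab
        have ha := a.isLt
        have hb := b.isLt
        fin_cases a <;> fin_cases b <;> simp at hab' ⊢ <;>
          first
            | omega
            | (simp only [Fin.lt_def, Fin.val_mk]; omega)
      · intro s t
        have hx0 : x ⟨0, hn⟩ = 1 := h0 _ rfl
        fin_cases s <;> fin_cases t <;> simp [hx0] <;> omega
    refine ⟨h1, h0, h2, ?_, ?_⟩
    · -- q3
      intro i j hji hxi2
      have hiNub : i ∈ Nub x := by
        intro j' hj' heq
        have := h2 j' i hj' heq
        omega
      rw [← hAN] at hiNub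
      exact hiNub j hji
    · -- q4
      intro i hxi2
      have : x i - 1 ∈ Set.Icc 1 k := by
        have := (hmem i).2
        constructor <;> omega
      rw [← hrange] at this
      obtain ⟨j, hj⟩ := this
      exact ⟨j, by omega⟩
  · rintro ⟨h1, h0, h2, h3, h4⟩
    have hx0 : x ⟨0, hn⟩ = 1 := h0 _ rfl
    refine ⟨⟨?_, ?_⟩, ?_⟩
    · -- Cayley
      set K := Finset.univ.sup x with hK
      have hKmem : ∃ i, x i = K := by
        obtain ⟨i, _, hi⟩ := Finset.exists_mem_eq_sup Finset.univ
          ⟨⟨0, hn⟩, Finset.mem_univ _⟩ x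
        exact ⟨i, hi.symm⟩
      have hrange : Set.range x = Set.Icc 1 K := by
        ext v
        constructor
        · rintro ⟨i, rfl⟩
          exact ⟨h1 i, Finset.le_sup (Finset.mem_univ i)⟩
        · rintro ⟨hv1, hvK⟩
          obtain ⟨i0, hi0⟩ := hKmem
          obtain ⟨j, hj⟩ := exists_pos_s9 h1 h4 (K - v) v hv1 ⟨i0, by omega⟩
          exact ⟨j, hj⟩
      refine ⟨K, ?_, hrange⟩
      -- K ≤ n
      have hinj : (Finset.Icc 1 K).card ≤ (Finset.univ : Finset (Fin n)).card := by
        set c : ℕ → Fin n := fun w =>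
          if h : ∃ j : Fin n, x j = w then Classical.choose h else ⟨0, hn⟩ with hc
        apply Finset.card_le_card_of_injOn c (fun w _ => Finset.mem_univ _)
        intro w hw w' hw' hcc
        simp only [Finset.coe_Icc, Set.mem_Icc] at hw hw'
        have hex : ∀ u, 1 ≤ u → u ≤ K → x (c u) = u := by
          intro u hu1 huK
          obtain ⟨i0, hi0⟩ := hKmem
          obtain ⟨j, hj⟩ := exists_pos_s9 h1 h4 (K - u) u hu1 ⟨i0, by omega⟩
          have hex' : ∃ j : Fin n, x j = u := ⟨j, hj⟩
          rw [hc]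
          simp only [dif_pos hex']
          exact Classical.choose_spec hex'
        have e1 := hex w hw.1 hw.2
        have e2 := hex w' hw'.1 hw'.2
        rw [hcc] at e1
        omega
      rw [Nat.card_Icc, Finset.card_univ, Fintype.card_fin] at hinj
      omega
    · -- AscTops = Nub
      ext i
      rcases Nat.lt_or_ge (x i) 2 with hlow | hhigh
      · have hxi : x i = 1 := by have := h1 i; omega
        rcases Nat.eq_zero_or_pos (i : ℕ) with hz | hpos
        · constructor
          · intro _ j hj _
            have : (j : ℕ) < (i : ℕ) := hj
            omega
          · intro _ j hj
            omega
        · apply iff_of_false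
          · intro hA
            have hlt : (i : ℕ) - 1 < n := by omega
            have := hA ⟨(i : ℕ) - 1, hlt⟩ (by simp; omega)
            have := h1 ⟨(i : ℕ) - 1, hlt⟩
            omega
          · intro hN
            have := hN ⟨0, hn⟩ (by rw [Fin.lt_def]; exact hpos)
            rw [hx0, hxi] at this
            exact this rfl
      · apply iff_of_true
        · intro j hj
          exact h3 i j hj hhigh
        · intro j hj heq
          have := h2 j i hj heq
          omega
    · -- Avoids
      rintro ⟨g, hg, hpat⟩
      have h01 : x (g 0) < x (g 1) := (hpat 0 1).mp (by decide)
      have a1 : ¬ x (g 1) < x (g 2) := fun h => absurd ((hpat 1 2).mpr h) (by decide)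
      have a2 : ¬ x (g 2) < x (g 1) := fun h => absurd ((hpat 2 1).mpr h) (by decide)
      have hbc : x (g 1) = x (g 2) := by omega
      have hlt : g 1 < g 2 := hg (by decide)
      have := h2 (g 1) (g 2) hlt hbc
      have := h1 (g 0)
      omega

theorem oc_le {x : Fin n → ℕ} : oc x ≤ n := by
  have := Finset.card_filter_le (Finset.univ : Finset (Fin n)) (fun j => x j = 1)
  simpa [oc] using this

theorem oc_pos (hn : 1 ≤ n) {x : Fin n → ℕ} (hx : Q x) : 1 ≤ oc x := by
  have : (⟨0, hn⟩ : Fin n) ∈ Finset.univ.filter fun j => x j = 1 := by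
    simp [hx.2.1 ⟨0, hn⟩ rfl]
  have := Finset.card_pos.mpr ⟨_, this⟩
  simpa [oc] using this

theorem val_bound {x : Fin n → ℕ} (hx : Q x) (i : Fin n) (h2 : 2 ≤ x i) :
    x i - 2 < n - oc x := by
  classical
  obtain ⟨h1, h0, hq2, hq3, hq4⟩ := hx
  have hn : 1 ≤ n := by have := i.isLt; omega
  have hcard : (Finset.Icc 2 (x i)).card ≤
      (Finset.univ.filter fun j => ¬ (x j = 1)).card := by
    set c : ℕ → Fin n := fun w =>
      if h : ∃ j : Fin n, x j = w then Classical.choose h else ⟨0, hn⟩ with hc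
    have hex : ∀ u, 2 ≤ u → u ≤ x i → x (c u) = u := by
      intro u hu1 huK
      obtain ⟨j, hj⟩ := exists_pos_s9 h1 hq4 (x i - u) u (by omega) ⟨i, by omega⟩
      have hex' : ∃ j : Fin n, x j = u := ⟨j, hj⟩
      rw [hc]
      simp only [dif_pos hex']
      exact Classical.choose_spec hex'
    apply Finset.card_le_card_of_injOn c
    · intro w hw
      simp only [Finset.mem_coe, Finset.mem_Icc] at hw
      have := hex w hw.1 hw.2
      simp only [Finset.mem_coe, Finset.mem_filter, Finset.mem_univ, true_and]
      omega
    · intro w hw w' hw' hcc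
      simp only [Finset.coe_Icc, Set.mem_Icc] at hw hw'
      have e1 := hex w hw.1 hw.2
      have e2 := hex w' hw'.1 hw'.2
      rw [hcc] at e1
      omega
  have hsplit := Finset.card_filter_add_card_filter_not
    (s := (Finset.univ : Finset (Fin n))) (p := fun j => x j = 1)
  rw [Nat.card_Icc] at hcard
  have hunivcard : (Finset.univ : Finset (Fin n)).card = n := by
    simp
  rw [hunivcard] at hsplit
  have : oc x = (Finset.univ.filter fun j => x j = 1).card := rfl
  omega

/- ### keys and decoding -/

def keyset (n m : ℕ) (f : Fin (n - m) → Fin m) : Finset ℕ :=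
  ((Finset.range m).image fun s => s * (n + 1)) ∪
    (Finset.univ.image fun v : Fin (n - m) => (f v : ℕ) * (n + 1) + (v : ℕ) + 1)

theorem mem_keyset {m : ℕ} {f : Fin (n - m) → Fin m} {t : ℕ} :
    t ∈ keyset n m f ↔
      (∃ s, s < m ∧ t = s * (n + 1)) ∨ (∃ v : Fin (n - m), t = (f v : ℕ) * (n + 1) + v + 1) := by
  simp only [keyset, Finset.mem_union, Finset.mem_image, Finset.mem_range, Finset.mem_univ,
    true_and]
  constructor
  · rintro (⟨s, hs, rfl⟩ | ⟨v, rfl⟩)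
    · exact Or.inl ⟨s, hs, rfl⟩
    · exact Or.inr ⟨v, rfl⟩
  · rintro (⟨s, hs, rfl⟩ | ⟨v, rfl⟩)
    · exact Or.inl ⟨s, hs, rfl⟩
    · exact Or.inr ⟨v, rfl⟩

theorem key_mod_one (n s : ℕ) : s * (n + 1) % (n + 1) = 0 := Nat.mul_mod_left s (n + 1)

theorem key_mod_val {m : ℕ} (hm : m ≤ n) (v fv : ℕ) (hv : v < n - m) :
    (fv * (n + 1) + v + 1) % (n + 1) = v + 1 := by
  have h : fv * (n + 1) + v + 1 = (v + 1) + fv * (n + 1) := by ring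
  rw [h, Nat.add_mul_mod_self_right, Nat.mod_eq_of_lt (by omega)]

theorem key_div_one (n s : ℕ) : s * (n + 1) / (n + 1) = s :=
  Nat.mul_div_cancel s (Nat.succ_pos n)

theorem key_div_val {m : ℕ} (hm : m ≤ n) (v fv : ℕ) (hv : v < n - m) :
    (fv * (n + 1) + v + 1) / (n + 1) = fv := by
  have h : fv * (n + 1) + v + 1 = (v + 1) + fv * (n + 1) := by ring
  rw [h, Nat.add_mul_div_right _ _ (Nat.succ_pos n), Nat.div_eq_of_lt (by omega)]
  omega

theorem card_keyset (m : ℕ) (hm : m ≤ n) (f : Fin (n - m) → Fin m) :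
    (keyset n m f).card = n := by
  classical
  rw [keyset, Finset.card_union_of_disjoint, Finset.card_image_of_injOn,
    Finset.card_image_of_injOn, Finset.card_range, Finset.card_univ, Fintype.card_fin]
  · omega
  · intro v _ w _ h
    have h' : (f v : ℕ) * (n + 1) + v + 1 = (f w : ℕ) * (n + 1) + w + 1 := h
    have h1 := key_mod_val hm (v : ℕ) (f v : ℕ) v.isLt
    have h2 := key_mod_val hm (w : ℕ) (f w : ℕ) w.isLt
    rw [h'] at h1
    rw [h1] at h2
    exact Fin.ext (by omega)
  · intro s _ t _ h
    have : 0 < n + 1 := Nat.succ_pos n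
    exact Nat.eq_of_mul_eq_mul_right this h
  · rw [Finset.disjoint_left]
    rintro a ha hb
    simp only [Finset.mem_image, Finset.mem_range, Finset.mem_univ, true_and] at ha hb
    obtain ⟨s, _, rfl⟩ := ha
    obtain ⟨v, hv⟩ := hb
    have hv' : (f v : ℕ) * (n + 1) + v + 1 = s * (n + 1) := hv
    have h1 := key_mod_one n s
    have h2 := key_mod_val hm (v : ℕ) (f v : ℕ) v.isLt
    rw [← hv'] at h1
    omega

noncomputable def emb (m : ℕ) (hm : m ≤ n) (f : Fin (n - m) → Fin m) : Fin n → ℕ :=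
  fun i => ((keyset n m f).orderEmbOfFin (card_keyset m hm f)) i

theorem emb_mem (m : ℕ) (hm : m ≤ n) (f : Fin (n - m) → Fin m) (i : Fin n) :
    emb m hm f i ∈ keyset n m f := Finset.orderEmbOfFin_mem _ _ _

theorem emb_strictMono (m : ℕ) (hm : m ≤ n) (f : Fin (n - m) → Fin m) :
    StrictMono (emb m hm f) := (Finset.orderEmbOfFin _ _).strictMono

theorem emb_lt_iff (m : ℕ) (hm : m ≤ n) (f : Fin (n - m) → Fin m) (i j : Fin n) :
    emb m hm f i < emb m hm f j ↔ i < j := (emb_strictMono m hm f).lt_iff_lt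

theorem emb_inj (m : ℕ) (hm : m ≤ n) (f : Fin (n - m) → Fin m) {i j : Fin n}
    (h : emb m hm f i = emb m hm f j) : i = j := (emb_strictMono m hm f).injective h

theorem emb_surj (m : ℕ) (hm : m ≤ n) (f : Fin (n - m) → Fin m) {t : ℕ}
    (ht : t ∈ keyset n m f) : ∃ i, emb m hm f i = t := by
  have := Finset.range_orderEmbOfFin (keyset n m f) (card_keyset m hm f)
  have ht' : t ∈ Set.range ((keyset n m f).orderEmbOfFin (card_keyset m hm f)) := by
    rw [this]; exact ht
  obtain ⟨i, hi⟩ := ht'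
  exact ⟨i, hi⟩

noncomputable def decode (m : ℕ) (hm : m ≤ n) (f : Fin (n - m) → Fin m) : Fin n → ℕ :=
  fun i => if emb m hm f i % (n + 1) = 0 then 1 else emb m hm f i % (n + 1) + 1

theorem decode_cases (m : ℕ) (hm : m ≤ n) (f : Fin (n - m) → Fin m) (i : Fin n) :
    (∃ s, s < m ∧ emb m hm f i = s * (n + 1) ∧ decode m hm f i = 1) ∨
    (∃ v : Fin (n - m), emb m hm f i = (f v : ℕ) * (n + 1) + v + 1 ∧
      decode m hm f i = (v : ℕ) + 2) := by
  rcases mem_keyset.mp (emb_mem m hm f i) with ⟨s, hs, hkey⟩ | ⟨v, hkey⟩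
  · refine Or.inl ⟨s, hs, hkey, ?_⟩
    rw [decode, hkey, key_mod_one]
    simp
  · refine Or.inr ⟨v, hkey, ?_⟩
    rw [decode, hkey, key_mod_val hm (v : ℕ) (f v : ℕ) v.isLt]
    simp

theorem decode_pos (m : ℕ) (hm : m ≤ n) (f : Fin (n - m) → Fin m) (i : Fin n) :
    1 ≤ decode m hm f i := by
  rw [decode]
  split <;> omega

theorem decode_val_inj (m : ℕ) (hm : m ≤ n) (f : Fin (n - m) → Fin m) {i j : Fin n}
    (hij : decode m hm f i = decode m hm f j) (h2 : 2 ≤ decode m hm f i) : i = j := by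
  rcases decode_cases m hm f i with ⟨s, _, _, hd⟩ | ⟨v, hkv, hdv⟩
  · omega
  rcases decode_cases m hm f j with ⟨s, _, _, hd⟩ | ⟨w, hkw, hdw⟩
  · omega
  have hvw : v = w := Fin.ext (by omega)
  apply emb_inj m hm f
  rw [hkv, hkw, hvw]

theorem decode_key_one (m : ℕ) (hm : m ≤ n) (f : Fin (n - m) → Fin m) {i : Fin n} (s : ℕ)
    (h : emb m hm f i = s * (n + 1)) : decode m hm f i = 1 := by
  rw [decode, h, key_mod_one]
  simp

theorem decode_key_val (m : ℕ) (hm : m ≤ n) (f : Fin (n - m) → Fin m) {i : Fin n}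
    (v : Fin (n - m)) (h : emb m hm f i = (f v : ℕ) * (n + 1) + v + 1) :
    decode m hm f i = (v : ℕ) + 2 := by
  rw [decode, h, key_mod_val hm (v : ℕ) (f v : ℕ) v.isLt]
  simp

theorem decode_one_or_two (m : ℕ) (hm : m ≤ n) (f : Fin (n - m) → Fin m) (i : Fin n) :
    decode m hm f i = 1 ∨ 2 ≤ decode m hm f i := by
  rw [decode]; split <;> omega

theorem decode_Q (m : ℕ) (hm1 : 1 ≤ m) (hm : m ≤ n) (f : Fin (n - m) → Fin m) :
    Q (decode m hm f) := by
  have hn : 1 ≤ n := le_trans hm1 hm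
  refine ⟨decode_pos m hm f, ?_, ?_, ?_, ?_⟩
  · -- first entry is 1
    intro i hi
    have h0 : (0 : ℕ) ∈ keyset n m f := mem_keyset.mpr (Or.inl ⟨0, hm1, by ring⟩)
    obtain ⟨j, hj⟩ := emb_surj m hm f h0
    have hij : i ≤ j := by
      rw [Fin.le_def]; omega
    have : emb m hm f i ≤ emb m hm f j := (emb_strictMono m hm f).monotone hij
    have hzero : emb m hm f i = 0 := by omega
    exact decode_key_one m hm f 0 (by rw [hzero]; ring)
  · -- distinctness
    intro i j hij heq
    rcases decode_one_or_two m hm f i with h | h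
    · exact h
    · exact absurd (decode_val_inj m hm f heq h) (Fin.ne_of_lt hij)
  · -- ascent condition
    intro i j hji h2
    rcases decode_cases m hm f i with ⟨s, _, _, hd⟩ | ⟨v, hkv, hdv⟩
    · omega
    rcases decode_cases m hm f j with ⟨s, hs, hkj, hdj⟩ | ⟨w, hkw, hdw⟩
    · rw [hdj, hdv]; omega
    have hji' : j < i := by rw [Fin.lt_def]; omega
    have hkey_lt : emb m hm f j < emb m hm f i := (emb_lt_iff m hm f j i).mpr hji'
    have hvn : (v : ℕ) < n - m := v.isLt
    have hwn : (w : ℕ) < n - m := w.isLt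
    rcases lt_trichotomy (f w : ℕ) (f v : ℕ) with hlt | hfeq | hgt
    · exfalso
      have htk : (f v : ℕ) * (n + 1) ∈ keyset n m f :=
        mem_keyset.mpr (Or.inl ⟨(f v : ℕ), (f v).isLt, rfl⟩)
      obtain ⟨l, hl⟩ := emb_surj m hm f htk
      have hmul : ((f w : ℕ) + 1) * (n + 1) ≤ (f v : ℕ) * (n + 1) :=
        Nat.mul_le_mul_right _ (by omega)
      have hexp : ((f w : ℕ) + 1) * (n + 1) = (f w : ℕ) * (n + 1) + (n + 1) := by ring
      have h1 : emb m hm f j < emb m hm f l := by rw [hkw, hl]; omega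
      have h2' : emb m hm f l < emb m hm f i := by rw [hl, hkv]; omega
      have l1 := (emb_lt_iff m hm f j l).mp h1
      have l2 := (emb_lt_iff m hm f l i).mp h2'
      rw [Fin.lt_def] at l1 l2
      omega
    · rw [hdw, hdv]
      rw [hkw, hkv, hfeq] at hkey_lt
      omega
    · exfalso
      have hmul : ((f v : ℕ) + 1) * (n + 1) ≤ (f w : ℕ) * (n + 1) :=
        Nat.mul_le_mul_right _ (by omega)
      have hexp : ((f v : ℕ) + 1) * (n + 1) = (f v : ℕ) * (n + 1) + (n + 1) := by ring
      rw [hkw, hkv] at hkey_lt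
      omega
  · -- predecessor value exists
    intro i h2
    rcases decode_cases m hm f i with ⟨s, _, _, hd⟩ | ⟨v, hkv, hdv⟩
    · omega
    rcases Nat.eq_zero_or_pos (v : ℕ) with hv0 | hvpos
    · have h0 : (0 : ℕ) ∈ keyset n m f := mem_keyset.mpr (Or.inl ⟨0, hm1, by ring⟩)
      obtain ⟨j, hj⟩ := emb_surj m hm f h0
      have := decode_key_one m hm f 0 (by rw [hj]; ring)
      exact ⟨j, by omega⟩
    · set v' : Fin (n - m) := ⟨(v : ℕ) - 1, by omega⟩ with hv'
      have htk : (f v' : ℕ) * (n + 1) + (v' : ℕ) + 1 ∈ keyset n m f :=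
        mem_keyset.mpr (Or.inr ⟨v', rfl⟩)
      obtain ⟨j, hj⟩ := emb_surj m hm f htk
      have hdj := decode_key_val m hm f v' hj
      refine ⟨j, ?_⟩
      rw [hdj, hdv, hv']
      simp only [Fin.val_mk]
      omega

theorem decode_oc (m : ℕ) (hm1 : 1 ≤ m) (hm : m ≤ n) (f : Fin (n - m) → Fin m) :
    oc (decode m hm f) = m := by
  classical
  have key : (Finset.univ.filter fun j => decode m hm f j = 1).card =
      (Finset.range m).card := by
    apply Finset.card_bij (fun i _ => emb m hm f i / (n + 1))
    · intro a ha
      simp only [Finset.mem_filter, Finset.mem_univ, true_and] at ha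
      rcases decode_cases m hm f a with ⟨s, hs, hk, _⟩ | ⟨v, _, hd⟩
      · rw [hk, key_div_one]
        exact Finset.mem_range.mpr hs
      · omega
    · intro a ha b hb hab
      simp only [Finset.mem_filter, Finset.mem_univ, true_and] at ha hb
      rcases decode_cases m hm f a with ⟨s, hs, hk, _⟩ | ⟨v, _, hd⟩
      · rcases decode_cases m hm f b with ⟨s', hs', hk', _⟩ | ⟨v', _, hd'⟩
        · rw [hk, hk', key_div_one, key_div_one] at hab
          exact emb_inj m hm f (by rw [hk, hk', hab])
        · omega
      · omega
    · intro b hb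
      rw [Finset.mem_range] at hb
      have htk : b * (n + 1) ∈ keyset n m f := mem_keyset.mpr (Or.inl ⟨b, hb, rfl⟩)
      obtain ⟨i, hi⟩ := emb_surj m hm f htk
      refine ⟨i, ?_, ?_⟩
      · simp only [Finset.mem_filter, Finset.mem_univ, true_and]
        exact decode_key_one m hm f b hi
      · rw [hi, key_div_one]
  rw [oc, key, Finset.card_range]

def encN (x : Fin n → ℕ) (v : ℕ) : ℕ :=
  (Finset.univ.filter fun j => x j = 1 ∧ ∃ i : Fin n, x i = v + 2 ∧ j < i).card - 1

theorem encN_decode (m : ℕ) (hm1 : 1 ≤ m) (hm : m ≤ n) (f : Fin (n - m) → Fin m)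
    (v : Fin (n - m)) : encN (decode m hm f) (v : ℕ) = (f v : ℕ) := by
  classical
  have hkv : (f v : ℕ) * (n + 1) + (v : ℕ) + 1 ∈ keyset n m f :=
    mem_keyset.mpr (Or.inr ⟨v, rfl⟩)
  obtain ⟨pos, hpos⟩ := emb_surj m hm f hkv
  have hpdec : decode m hm f pos = (v : ℕ) + 2 := decode_key_val m hm f v hpos
  have hA : ∀ j : Fin n, (∃ i, decode m hm f i = (v : ℕ) + 2 ∧ j < i) ↔ j < pos := by
    intro j
    constructor
    · rintro ⟨i, hi, hji⟩
      have : i = pos := decode_val_inj m hm f (by rw [hi, hpdec]) (by omega)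
      rwa [this] at hji
    · intro h
      exact ⟨pos, hpdec, h⟩
  have hfil : (Finset.univ.filter fun j => decode m hm f j = 1 ∧
      ∃ i, decode m hm f i = (v : ℕ) + 2 ∧ j < i) =
      Finset.univ.filter fun j => decode m hm f j = 1 ∧ j < pos := by
    apply Finset.filter_congr
    intro j _
    rw [hA j]
  rw [encN, hfil]
  have hcard : (Finset.univ.filter fun j => decode m hm f j = 1 ∧ j < pos).card =
      (f v : ℕ) + 1 := by
    rw [← Finset.card_range ((f v : ℕ) + 1)]
    apply Finset.card_bij (fun i _ => emb m hm f i / (n + 1))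
    · intro a ha
      simp only [Finset.mem_filter, Finset.mem_univ, true_and] at ha
      rcases decode_cases m hm f a with ⟨s, hs, hk, _⟩ | ⟨w, _, hd⟩
      · rw [hk, key_div_one, Finset.mem_range]
        have hlt : emb m hm f a < emb m hm f pos := (emb_lt_iff m hm f a pos).mpr ha.2
        rw [hk, hpos] at hlt
        by_contra hcon
        have hmul : ((f v : ℕ) + 1) * (n + 1) ≤ s * (n + 1) :=
          Nat.mul_le_mul_right _ (by omega)
        have hexp : ((f v : ℕ) + 1) * (n + 1) = (f v : ℕ) * (n + 1) + (n + 1) := by ring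
        have hvn : (v : ℕ) < n - m := v.isLt
        omega
      · omega
    · intro a ha b hb hab
      simp only [Finset.mem_filter, Finset.mem_univ, true_and] at ha hb
      rcases decode_cases m hm f a with ⟨s, hs, hk, _⟩ | ⟨w, _, hd⟩
      · rcases decode_cases m hm f b with ⟨s', hs', hk', _⟩ | ⟨w', _, hd'⟩
        · rw [hk, hk', key_div_one, key_div_one] at hab
          exact emb_inj m hm f (by rw [hk, hk', hab])
        · omega
      · omega
    · intro b hb
      rw [Finset.mem_range] at hb
      have hbm : b < m := lt_of_le_of_lt (by omega) (f v).isLt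
      have htk : b * (n + 1) ∈ keyset n m f := mem_keyset.mpr (Or.inl ⟨b, hbm, rfl⟩)
      obtain ⟨i, hi⟩ := emb_surj m hm f htk
      refine ⟨i, ?_, ?_⟩
      · simp only [Finset.mem_filter, Finset.mem_univ, true_and]
        refine ⟨decode_key_one m hm f b hi, ?_⟩
        rw [← emb_lt_iff m hm f i pos, hi, hpos]
        have hmul : b * (n + 1) ≤ (f v : ℕ) * (n + 1) := Nat.mul_le_mul_right _ (by omega)
        omega
      · rw [hi, key_div_one]
  rw [hcard]
  omega

theorem decode_surj (m : ℕ) (hm1 : 1 ≤ m) (hm : m ≤ n) {x : Fin n → ℕ}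
    (hx : Q x) (hoc : oc x = m) : ∃ f : Fin (n - m) → Fin m, decode m hm f = x := by
  classical
  have h1 := hx.1
  have h0 := hx.2.1
  have h2 := hx.2.2.1
  have h3 := hx.2.2.2.1
  have hn : 1 ≤ n := le_trans hm1 hm
  have hx0 : x ⟨0, hn⟩ = 1 := h0 _ rfl
  have hocm : (Finset.univ.filter fun j => x j = 1).card = m := hoc
  have xle : ∀ i, x i ≤ n - m + 1 := by
    intro i
    rcases Nat.lt_or_ge (x i) 2 with h | h
    · have := h1 i; omega
    · have := val_bound hx i h; omega
  have vbnd : ∀ i, 2 ≤ x i → x i - 2 < n - m := by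
    intro i h
    have := val_bound hx i h; omega
  set B : Fin n → ℕ := fun i => (Finset.univ.filter fun j => j < i ∧ x j = 1).card with hB
  have Bmono : ∀ i j : Fin n, i ≤ j → B i ≤ B j := by
    intro i j hij
    apply Finset.card_le_card
    intro a ha
    simp only [Finset.mem_filter, Finset.mem_univ, true_and] at ha ⊢
    exact ⟨lt_of_lt_of_le ha.1 hij, ha.2⟩
  have Bstep : ∀ i j : Fin n, i < j → x i = 1 → B i + 1 ≤ B j := by
    intro i j hij hxi
    have hni : i ∉ Finset.univ.filter fun a => a < i ∧ x a = 1 := by simp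
    have hsub : insert i (Finset.univ.filter fun a => a < i ∧ x a = 1) ⊆
        Finset.univ.filter fun a => a < j ∧ x a = 1 := by
      intro a ha
      rcases Finset.mem_insert.mp ha with rfl | ha
      · simp only [Finset.mem_filter, Finset.mem_univ, true_and]
        exact ⟨hij, hxi⟩
      · simp only [Finset.mem_filter, Finset.mem_univ, true_and] at ha ⊢
        exact ⟨lt_trans ha.1 hij, ha.2⟩
    have := Finset.card_le_card hsub
    rw [Finset.card_insert_of_notMem hni] at this
    exact this
  have Ble' : ∀ i : Fin n, B i ≤ m := by
    intro i
    rw [← hocm]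
    apply Finset.card_le_card
    intro a ha
    simp only [Finset.mem_filter, Finset.mem_univ, true_and] at ha ⊢
    exact ha.2
  have Ble : ∀ i : Fin n, x i = 1 → B i + 1 ≤ m := by
    intro i hxi
    rw [← hocm]
    have hni : i ∉ Finset.univ.filter fun a => a < i ∧ x a = 1 := by simp
    have hsub : insert i (Finset.univ.filter fun a => a < i ∧ x a = 1) ⊆
        Finset.univ.filter fun a => x a = 1 := by
      intro a ha
      rcases Finset.mem_insert.mp ha with rfl | ha
      · simp only [Finset.mem_filter, Finset.mem_univ, true_and]
        exact hxi
      · simp only [Finset.mem_filter, Finset.mem_univ, true_and] at ha ⊢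
        exact ha.2
    have := Finset.card_le_card hsub
    rw [Finset.card_insert_of_notMem hni] at this
    exact this
  have Bpos : ∀ i : Fin n, 2 ≤ x i → 1 ≤ B i := by
    intro i h2i
    have hipos : 0 < (i : ℕ) := by
      rcases Nat.eq_zero_or_pos (i : ℕ) with h | h
      · rw [h0 i h] at h2i; omega
      · exact h
    have hmem : (⟨0, hn⟩ : Fin n) ∈ Finset.univ.filter fun j => j < i ∧ x j = 1 := by
      simp only [Finset.mem_filter, Finset.mem_univ, true_and]
      exact ⟨by rw [Fin.lt_def]; exact hipos, hx0⟩
    exact Finset.card_pos.mpr ⟨_, hmem⟩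
  have block : ∀ (d : ℕ) (i j : Fin n), (j : ℕ) = (i : ℕ) + d + 1 → B i = B j →
      2 ≤ x j → x i < x j := by
    intro d
    induction d with
    | zero =>
      intro i j hji hBij h2j
      exact h3 j i (by omega) h2j
    | succ d ih =>
      intro i j hji hBij h2j
      have hj' : (j : ℕ) - 1 < n := by have := j.isLt; omega
      set j' : Fin n := ⟨(j : ℕ) - 1, hj'⟩ with hj'def
      have hij' : i < j' := by rw [Fin.lt_def]; simp only [hj'def, Fin.val_mk]; omega
      have hj'j : j' < j := by rw [Fin.lt_def]; simp only [hj'def, Fin.val_mk]; omega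
      have hBj' : B i = B j' := by
        have u1 := Bmono i j' (le_of_lt hij')
        have u2 := Bmono j' j (le_of_lt hj'j)
        omega
      have hxj' : x j' ≠ 1 := by
        intro hone
        have := Bstep j' j hj'j hone
        omega
      have h2j' : 2 ≤ x j' := by have := h1 j'; omega
      have step : x j' < x j := h3 j j' (by simp only [hj'def, Fin.val_mk]; omega) h2j
      have := ih i j' (by simp only [hj'def, Fin.val_mk]; omega) hBj' h2j'
      omega
  set K : Fin n → ℕ := fun i => if x i = 1 then B i * (n + 1)
    else (B i - 1) * (n + 1) + (x i - 1) with hKdef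
  have Kone : ∀ i, x i = 1 → K i = B i * (n + 1) := by
    intro i hxi; simp only [hKdef]; rw [if_pos hxi]
  have Kval : ∀ i, x i ≠ 1 → K i = (B i - 1) * (n + 1) + (x i - 1) := by
    intro i hxi; simp only [hKdef]; rw [if_neg hxi]
  have Kmono : StrictMono K := by
    intro i j hij
    by_cases hxi : x i = 1 <;> by_cases hxj : x j = 1
    · rw [Kone i hxi, Kone j hxj]
      have := Bstep i j hij hxi
      exact (Nat.mul_lt_mul_right (Nat.succ_pos n)).mpr (by omega)
    · rw [Kone i hxi, Kval j hxj]
      have hst := Bstep i j hij hxi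
      have h2j : 2 ≤ x j := by have := h1 j; omega
      have hmul : B i * (n + 1) ≤ (B j - 1) * (n + 1) := Nat.mul_le_mul_right _ (by omega)
      omega
    · rw [Kval i hxi, Kone j hxj]
      have h2i : 2 ≤ x i := by have := h1 i; omega
      have hbp := Bpos i h2i
      have e1 : ((B i - 1) + 1) * (n + 1) = (B i - 1) * (n + 1) + (n + 1) := by ring
      have e2 : (B i - 1) + 1 = B i := by omega
      rw [e2] at e1
      have hmul : B i * (n + 1) ≤ B j * (n + 1) :=
        Nat.mul_le_mul_right _ (Bmono i j (le_of_lt hij))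
      have := xle i
      omega
    · rw [Kval i hxi, Kval j hxj]
      have h2i : 2 ≤ x i := by have := h1 i; omega
      have h2j : 2 ≤ x j := by have := h1 j; omega
      rcases eq_or_lt_of_le (Bmono i j (le_of_lt hij)) with hBeq | hBlt
      · have hlt : x i < x j := by
          apply block ((j : ℕ) - (i : ℕ) - 1) i j ?_ hBeq h2j
          have : (i : ℕ) < (j : ℕ) := hij
          omega
        rw [hBeq]
        omega
      · have hbp := Bpos i h2i
        have e1 : ((B i - 1) + 1) * (n + 1) = (B i - 1) * (n + 1) + (n + 1) := by ring
        have e2 : (B i - 1) + 1 = B i := by omega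
        rw [e2] at e1
        have hmul : B i * (n + 1) ≤ (B j - 1) * (n + 1) := Nat.mul_le_mul_right _ (by omega)
        have := xle i
        omega
  -- every value occurs
  have occ : ∀ v : Fin (n - m), ∃ i : Fin n, x i = (v : ℕ) + 2 := by
    set W := (Finset.univ.filter fun j => ¬ x j = 1).image x with hW
    have hWcard : W.card = n - m := by
      rw [hW, Finset.card_image_of_injOn]
      · have hsplit := Finset.card_filter_add_card_filter_not
          (s := (Finset.univ : Finset (Fin n))) (p := fun j => x j = 1)
        have : (Finset.univ : Finset (Fin n)).card = n := by simp
        omega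
      · intro a ha b hb hab
        simp only [Finset.coe_filter, Finset.mem_univ, true_and, Set.mem_setOf_eq] at ha hb
        rcases lt_trichotomy a b with h | h | h
        · exact absurd (h2 a b h hab) ha
        · exact h
        · exact absurd (h2 b a h hab.symm) hb
    have hWsub : W ⊆ Finset.Icc 2 (n - m + 1) := by
      intro w hw
      rw [hW] at hw
      obtain ⟨j, hj, rfl⟩ := Finset.mem_image.mp hw
      simp only [Finset.mem_filter, Finset.mem_univ, true_and] at hj
      have := h1 j
      have := xle j
      rw [Finset.mem_Icc]
      omega
    have hWeq : W = Finset.Icc 2 (n - m + 1) := by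
      apply Finset.eq_of_subset_of_card_le hWsub
      rw [Nat.card_Icc, hWcard]
      omega
    intro v
    have hv : (v : ℕ) + 2 ∈ Finset.Icc 2 (n - m + 1) := by
      rw [Finset.mem_Icc]
      have := v.isLt
      omega
    rw [← hWeq, hW] at hv
    obtain ⟨j, _, hj⟩ := Finset.mem_image.mp hv
    exact ⟨j, hj⟩
  set pos : Fin (n - m) → Fin n := fun v => Classical.choose (occ v) with hpos
  have hposv : ∀ v, x (pos v) = (v : ℕ) + 2 := fun v => Classical.choose_spec (occ v)
  have uniq : ∀ (v : Fin (n - m)) (i : Fin n), x i = (v : ℕ) + 2 → i = pos v := by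
    intro v i hi
    have hpv := hposv v
    rcases lt_trichotomy i (pos v) with h | h | h
    · have := h2 i (pos v) h (by omega)
      omega
    · exact h
    · have := h2 (pos v) i h (by omega)
      omega
  have hBposv : ∀ v : Fin (n - m), 1 ≤ B (pos v) ∧ B (pos v) ≤ m := by
    intro v
    exact ⟨Bpos (pos v) (by have := hposv v; omega), Ble' (pos v)⟩
  set f : Fin (n - m) → Fin m := fun v => ⟨B (pos v) - 1, by
    have := hBposv v; omega⟩ with hf
  have hfv : ∀ v, (f v : ℕ) = B (pos v) - 1 := fun v => rfl
  -- K lands in the keyset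
  have hKmem : ∀ i, K i ∈ keyset n m f := by
    intro i
    by_cases hxi : x i = 1
    · rw [Kone i hxi]
      exact mem_keyset.mpr (Or.inl ⟨B i, by have := Ble i hxi; omega, rfl⟩)
    · have h2i : 2 ≤ x i := by have := h1 i; omega
      set v : Fin (n - m) := ⟨x i - 2, vbnd i h2i⟩ with hv
      have hxiv : x i = (v : ℕ) + 2 := by simp only [hv, Fin.val_mk]; omega
      have hipos : i = pos v := uniq v i hxiv
      apply mem_keyset.mpr
      refine Or.inr ⟨v, ?_⟩
      rw [Kval i hxi, hfv v, ← hipos]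
      have hbp := Bpos i h2i
      simp only [hv, Fin.val_mk]
      omega
  have himg : Finset.univ.image K = keyset n m f := by
    apply Finset.eq_of_subset_of_card_le
    · intro t ht
      obtain ⟨i, _, rfl⟩ := Finset.mem_image.mp ht
      exact hKmem i
    · rw [card_keyset m hm f, Finset.card_image_of_injective _ Kmono.injective]
      simp
  have hKE : ∀ i, emb m hm f i = K i := by
    have hu := Finset.orderEmbOfFin_unique (card_keyset m hm f) hKmem Kmono
    intro i
    rw [emb, ← hu]
  refine ⟨f, ?_⟩
  funext i
  by_cases hxi : x i = 1
  · rw [decode, hKE i, Kone i hxi, key_mod_one]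
    simp [hxi]
  · have h2i : 2 ≤ x i := by have := h1 i; omega
    have hsh : K i = (B i - 1) * (n + 1) + (x i - 2) + 1 := by
      rw [Kval i hxi]
      omega
    have hmod : K i % (n + 1) = (x i - 2) + 1 :=
      hsh ▸ key_mod_val hm (x i - 2) (B i - 1) (vbnd i h2i)
    rw [decode, hKE i, hmod]
    rw [if_neg (by omega)]
    omega

end Aux

open Aux in
/-- `|Modasc_n(122)| = Σ_{k=1}^n k^{n-k}` for `n ≥ 1`. -/
theorem count_122 (n : ℕ) (hn : 1 ≤ n) :
    Nat.card {x : Fin n → ℕ // IsModasc x ∧ Avoids x ![1, 2, 2]} =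
      ∑ k ∈ Finset.Icc 1 n, k ^ (n - k) := by
  classical
  have e1 : {x : Fin n → ℕ // IsModasc x ∧ Avoids x ![1, 2, 2]} ≃ {x : Fin n → ℕ // Q x} :=
    Equiv.subtypeEquivRight (fun x => char hn x)
  set fib : {x : Fin n → ℕ // Q x} → ↥(Finset.Icc 1 n) := fun p =>
    ⟨oc p.1, by simp only [Finset.mem_Icc]; exact ⟨oc_pos hn p.2, oc_le⟩⟩ with hfib
  have e2 : (Σ c : ↥(Finset.Icc 1 n), {p : {x : Fin n → ℕ // Q x} // fib p = c}) ≃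
      {x : Fin n → ℕ // Q x} := Equiv.sigmaFiberEquiv fib
  have e3 : ∀ c : ↥(Finset.Icc 1 n), {p : {x : Fin n → ℕ // Q x} // fib p = c} ≃
      {x : Fin n → ℕ // Q x ∧ oc x = (c : ℕ)} := by
    intro c
    refine (Equiv.subtypeEquivRight (fun p => ?_)).trans
      (Equiv.subtypeSubtypeEquivSubtypeInter Q (fun x => oc x = (c : ℕ)))
    constructor
    · intro h; rw [hfib] at h; exact congrArg Subtype.val h
    · intro h; rw [hfib]; exact Subtype.ext h
  have e4 : ∀ c : ↥(Finset.Icc 1 n),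
      (Fin (n - (c : ℕ)) → Fin (c : ℕ)) ≃ {x : Fin n → ℕ // Q x ∧ oc x = (c : ℕ)} := by
    intro c
    have hc := c.2
    rw [Finset.mem_Icc] at hc
    refine Equiv.ofBijective
      (fun f => ⟨decode (c : ℕ) hc.2 f, decode_Q _ hc.1 hc.2 f, decode_oc _ hc.1 hc.2 f⟩) ⟨?_, ?_⟩
    · intro f g hfg
      simp only [Subtype.mk.injEq] at hfg
      funext v
      have h1 := encN_decode (c : ℕ) hc.1 hc.2 f v
      have h2 := encN_decode (c : ℕ) hc.1 hc.2 g v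
      rw [hfg] at h1
      exact Fin.ext (h1 ▸ h2 ▸ rfl : (f v : ℕ) = (g v : ℕ))
    · rintro ⟨x, hx, hoc⟩
      obtain ⟨f, hf⟩ := decode_surj (c : ℕ) hc.1 hc.2 hx hoc
      exact ⟨f, Subtype.ext hf⟩
  have E : {x : Fin n → ℕ // IsModasc x ∧ Avoids x ![1, 2, 2]} ≃
      (Σ c : ↥(Finset.Icc 1 n), (Fin (n - (c : ℕ)) → Fin (c : ℕ))) :=
    (e1.trans e2.symm).trans (Equiv.sigmaCongrRight fun c => ((e4 c).trans (e3 c).symm).symm)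
  rw [Nat.card_congr E, Nat.card_eq_fintype_card, Fintype.card_sigma]
  rw [← Finset.sum_coe_sort (Finset.Icc 1 n) (fun k => k ^ (n - k))]
  congr 1
  funext c
  simp [Fintype.card_fun]
end

section
/- For every n ≥ 0, a primitive modified ascent sequence of length n avoids the pattern 122 if and only if it avoids the pattern 1232; that is, Prim_n(122) = Prim_n(1232). -/
/-- `Prim_n(122) = Prim_n(1232)` for every `n ≥ 0`. -/
theorem prim_122_eq_1232 (n : ℕ) :
    {x : Fin n → ℕ | IsPrim x ∧ Avoids x ![1, 2, 2]} =
      {x : Fin n → ℕ | IsPrim x ∧ Avoids x ![1, 2, 3, 2]} := by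
  ext x
  simp only [Set.mem_setOf_eq, and_congr_right_iff]
  intro hp
  constructor
  · -- avoids 122 → avoids 1232
    intro h122 ⟨f, hf, hrel⟩
    apply h122
    refine ⟨![f 0, f 1, f 3], ?_, ?_⟩
    · rw [Fin.strictMono_iff_lt_succ]
      intro i
      fin_cases i <;> simp <;>
        first
          | exact hf (by decide)
          | exact (hf (show (1:Fin 4) < 2 by decide)).trans (hf (by decide))
    · intro s t
      fin_cases s <;> fin_cases t <;>
        simp only [Matrix.cons_val_zero, Matrix.cons_val_one, Matrix.head_cons,
          Matrix.cons_val_two, Matrix.tail_cons, Matrix.cons_val_three] <;>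
        first
          | exact hrel 0 1
          | exact hrel 0 3
          | exact hrel 1 3
          | exact hrel 3 1
          | exact hrel 1 0
          | exact hrel 3 0
          | exact hrel 0 0
          | exact hrel 1 1
          | exact hrel 3 3
  · -- avoids 1232 → avoids 122
    intro h1232 ⟨f, hf, hrel⟩
    obtain ⟨⟨hcayley, hmod⟩, hnoflat⟩ := hp
    have hab : f 0 < f 1 := hf (by decide)
    have hbc : f 1 < f 2 := hf (by decide)
    have hxab : x (f 0) < x (f 1) := (hrel 0 1).mp (by simp)
    have hxbc : x (f 1) = x (f 2) := by
      have h1 : ¬ x (f 1) < x (f 2) := fun h => by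
        have := (hrel 1 2).mpr h; simp at this
      have h2 : ¬ x (f 2) < x (f 1) := fun h => by
        have := (hrel 2 1).mpr h; simp at this
      omega
    have hcnub : f 2 ∉ Nub x := fun h => h (f 1) hbc (by omega)
    have hcasc : f 2 ∉ AscTops x := by rwa [hmod]
    simp only [AscTops, Set.mem_setOf_eq, not_forall] at hcasc
    obtain ⟨j, hj, hjx⟩ := hcasc
    have hflat : x j ≠ x (f 2) := hnoflat j (f 2) (by omega)
    have hxjc : x (f 2) < x j := by omega
    have hbj : f 1 < j := by
      have h1 : (f 1 : ℕ) ≤ (j : ℕ) := by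
        have := hbc; rw [Fin.lt_def] at this; omega
      have h2 : (f 1 : ℕ) ≠ (j : ℕ) := by
        intro h
        have : f 1 = j := Fin.ext h
        rw [this] at hxbc; omega
      rw [Fin.lt_def]; omega
    have hjc : j < f 2 := by rw [Fin.lt_def]; omega
    apply h1232
    refine ⟨![f 0, f 1, j, f 2], ?_, ?_⟩
    · rw [Fin.strictMono_iff_lt_succ]
      intro i
      fin_cases i <;> simp <;>
        first
          | exact hab
          | exact hbj
          | exact hjc
    · have hxac : x (f 0) < x (f 2) := by omega
      have hxaj : x (f 0) < x j := by omega
      have hxbj : x (f 1) < x j := by omega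
      intro s t
      fin_cases s <;> fin_cases t <;>
        simp only [Matrix.cons_val_zero, Matrix.cons_val_one, Matrix.head_cons,
          Matrix.cons_val_two, Matrix.tail_cons, Matrix.cons_val_three,
          Matrix.cons_val_fin_one] <;>
        constructor <;> intro h <;> first | omega | (simp_all <;> omega)
end
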